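/- arXiv:2212.01781 — 13 statements merged into one kernel-verified Lean document; each statement's English description precedes it below -/
import Mathlib

section
/- Let G be a finite group, H a non-trivial normal subgroup of G, and let κ and τ be integers satisfying 0 ≤ κ ≤ |H| − 1, 1 ≤ τ ≤ |H| and gcd(2, |H| − 1) ∣ κ. If τ is even, then H is a (κ,τ)-regular set of G. -/
open Pointwise

/-- `R` is a `(κ,τ)`-regular set of the Cayley graph `Cay(G,X)`: every vertex in `R`
has exactly `κ` neighbours in `R`, and every vertex outside `R` has exactly `τ`
neighbours in `R`.  In `Cay(G,X)`, `g` is adjacent to `s` iff `g⁻¹ * s ∈ X`. -/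
def IsRegularSetOfCayley {G : Type*} [Group G] (X R : Set G) (κ τ : ℤ) : Prop :=
  (∀ r ∈ R, ({s ∈ R | r⁻¹ * s ∈ X}.ncard : ℤ) = κ) ∧
  (∀ g : G, g ∉ R → ({s ∈ R | g⁻¹ * s ∈ X}.ncard : ℤ) = τ)

/-- `X` is a valid connection set for a Cayley graph on `G`: it avoids the identity
and is inverse-closed. -/
def IsConnectionSet {G : Type*} [Group G] (X : Set G) : Prop :=
  (1 : G) ∉ X ∧ X⁻¹ = X

/-- `R` is a `(κ,τ)`-regular set of the group `G`: it is a `(κ,τ)`-regular set of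
some Cayley graph on `G`. -/
def IsRegularSetOfGroup {G : Type*} [Group G] (R : Set G) (κ τ : ℤ) : Prop :=
  ∃ X : Set G, IsConnectionSet X ∧ IsRegularSetOfCayley X R κ τ

/-- `R` is a perfect code of the group `G`: a `(0,1)`-regular set of `G`. -/
def IsPerfectCodeOfGroup {G : Type*} [Group G] (R : Set G) : Prop :=
  IsRegularSetOfGroup R 0 1

/-- `C` is a code of `G` with respect to `Y` with parameter `l`: every `g ∈ G` has
exactly `l` factorizations `g = c * y` with `c ∈ C`, `y ∈ Y`. -/
def IsCodeOfGroup {G : Type*} [Group G] (C Y : Set G) (l : ℕ) : Prop :=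
  ∀ g : G, {p : G × G | p.1 ∈ C ∧ p.2 ∈ Y ∧ g = p.1 * p.2}.ncard = l

section Aux
variable {G : Type*} [Group G] [DecidableEq G]

lemma pair_sel (S : Finset G) (hS : ∀ a ∈ S, a⁻¹ ∈ S) (h2 : 2 ≤ S.card) :
    ∃ P ⊆ S, (∀ a ∈ P, a⁻¹ ∈ P) ∧ P.card = 2 := by
  obtain ⟨a, ha⟩ : S.Nonempty := Finset.card_pos.mp (by omega)
  by_cases hfa : a⁻¹ = a
  · obtain ⟨b, hb, hba⟩ : ∃ b ∈ S, b ≠ a := by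
      by_contra h
      push_neg at h
      have : S ⊆ {a} := fun x hx => Finset.mem_singleton.mpr (h x hx)
      have := Finset.card_le_card this
      simp at this; omega
    by_cases hfb : b⁻¹ = b
    · refine ⟨{a, b}, ?_, ?_, ?_⟩
      · intro x hx; simp at hx; rcases hx with h | h <;> subst h <;> assumption
      · intro x hx; simp at hx; rcases hx with h | h <;> subst h <;> simp [hfa, hfb]
      · rw [Finset.card_insert_of_notMem (by simp [Ne.symm hba]), Finset.card_singleton]
    · refine ⟨{b, b⁻¹}, ?_, ?_, ?_⟩
      · intro x hx; simp at hx; rcases hx with h | h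
        · subst h; assumption
        · subst h; exact hS b hb
      · intro x hx; simp at hx; rcases hx with h | h <;> subst h <;> simp
      · rw [Finset.card_insert_of_notMem (by simp [Ne.symm hfb]), Finset.card_singleton]
  · refine ⟨{a, a⁻¹}, ?_, ?_, ?_⟩
    · intro x hx; simp at hx; rcases hx with h | h
      · subst h; assumption
      · subst h; exact hS a ha
    · intro x hx; simp at hx; rcases hx with h | h <;> subst h <;> simp
    · rw [Finset.card_insert_of_notMem (by simp [Ne.symm hfa]), Finset.card_singleton]

lemma even_sel : ∀ (m : ℕ) (S : Finset G), (∀ a ∈ S, a⁻¹ ∈ S) → 2 * m ≤ S.card →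
    ∃ T ⊆ S, (∀ a ∈ T, a⁻¹ ∈ T) ∧ T.card = 2 * m := by
  intro m
  induction m with
  | zero => intro S _ _; exact ⟨∅, Finset.empty_subset _, by simp, by simp⟩
  | succ m ih =>
    intro S hS hcard
    obtain ⟨P, hPS, hPinv, hP2⟩ := pair_sel S hS (by omega)
    have hsd : ∀ a ∈ S \ P, a⁻¹ ∈ S \ P := by
      intro a ha
      rw [Finset.mem_sdiff] at ha ⊢
      refine ⟨hS a ha.1, fun h => ha.2 ?_⟩
      simpa using hPinv _ h
    have hcard' : 2 * m ≤ (S \ P).card := by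
      rw [Finset.card_sdiff_of_subset hPS]; omega
    obtain ⟨T, hTS, hTinv, hTc⟩ := ih (S \ P) hsd hcard'
    refine ⟨T ∪ P, ?_, ?_, ?_⟩
    · exact Finset.union_subset (hTS.trans (Finset.sdiff_subset)) hPS
    · intro a ha
      rcases Finset.mem_union.mp ha with h | h
      · exact Finset.mem_union_left _ (hTinv a h)
      · exact Finset.mem_union_right _ (hPinv a h)
    · rw [Finset.card_union_of_disjoint, hTc, hP2]
      · ring
      · exact Finset.disjoint_left.mpr fun a haT haP =>
          (Finset.mem_sdiff.mp (hTS haT)).2 haP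

lemma gen_sel (S : Finset G) (hS : ∀ a ∈ S, a⁻¹ ∈ S) (k : ℕ) (hk : k ≤ S.card)
    (h : Even k ∨ ∃ a ∈ S, a⁻¹ = a) :
    ∃ T ⊆ S, (∀ a ∈ T, a⁻¹ ∈ T) ∧ T.card = k := by
  by_cases hek : Even k
  · obtain ⟨m, hm⟩ := hek
    obtain ⟨T, h1, h2, h3⟩ := even_sel m S hS (by omega)
    exact ⟨T, h1, h2, by omega⟩
  · obtain ⟨a, ha, hfa⟩ := h.resolve_left hek
    have hk1 : Even (k - 1) := by
      rcases Nat.even_or_odd k with h | h; exact absurd h hek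
      obtain ⟨m, hm⟩ := h; exact ⟨m, by omega⟩
    obtain ⟨m, hm⟩ := hk1
    have hsd : ∀ b ∈ S \ {a}, b⁻¹ ∈ S \ {a} := by
      intro b hb
      rw [Finset.mem_sdiff, Finset.mem_singleton] at hb ⊢
      refine ⟨hS b hb.1, fun h => hb.2 ?_⟩
      rw [← inv_inv b, h, hfa]
    have hk0 : 1 ≤ k := by
      rcases Nat.eq_zero_or_pos k with h | h
      · exact absurd (h ▸ Even.zero) hek
      · exact h
    obtain ⟨T, hTS, hTinv, hTc⟩ := even_sel m (S \ {a}) hsd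
      (by rw [Finset.card_sdiff_of_subset (Finset.singleton_subset_iff.mpr ha)]; simp; omega)
    refine ⟨insert a T, ?_, ?_, ?_⟩
    · exact Finset.insert_subset ha (hTS.trans Finset.sdiff_subset)
    · intro b hb
      rcases Finset.mem_insert.mp hb with h | h
      · subst h; simp [hfa]
      · exact Finset.mem_insert_of_mem (hTinv b h)
    · rw [Finset.card_insert_of_notMem fun h => (Finset.mem_sdiff.mp (hTS h)).2 (by simp),
        hTc]
      omega
end Aux

theorem statement_0 {G : Type*} [Group G] [Fintype G] (H : Subgroup G) [H.Normal]
    (hH : H ≠ ⊥) (κ τ : ℤ)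
    (hκ0 : 0 ≤ κ) (hκ1 : κ ≤ (Nat.card H : ℤ) - 1)
    (hτ0 : 1 ≤ τ) (hτ1 : τ ≤ (Nat.card H : ℤ))
    (hgcd : ((Nat.gcd 2 (Nat.card H - 1) : ℕ) : ℤ) ∣ κ)
    (hτeven : Even τ) :
    IsRegularSetOfGroup (H : Set G) κ τ := by
  classical
  set n := Nat.card H with hn
  have hn2 : 2 ≤ n := (Subgroup.one_lt_card_iff_ne_bot (H := H)).mpr hH
  set k := κ.toNat with hk
  set t := τ.toNat with ht
  have hκk : (k : ℤ) = κ := Int.toNat_of_nonneg hκ0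
  have hτt : (t : ℤ) = τ := Int.toNat_of_nonneg (by omega)
  have hkn : k ≤ n - 1 := by omega
  have htn : t ≤ n := by omega
  have hteven : Even t := by
    rw [← Int.even_coe_nat, hτt]; exact hτeven
  -- the set H \ {1} as a Finset
  set S₀ : Finset G := (H : Set G).toFinset \ {1} with hS₀
  have hmemS₀ : ∀ a : G, a ∈ S₀ ↔ a ∈ H ∧ a ≠ 1 := by
    intro a; simp [hS₀]
  have hS₀card : S₀.card = n - 1 := by
    rw [hS₀, Finset.card_sdiff_of_subset (by simpa using H.one_mem)]
    simp [Set.toFinset_card, hn, Nat.card_eq_fintype_card]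
  have hS₀inv : ∀ a ∈ S₀, a⁻¹ ∈ S₀ := by
    intro a ha
    rw [hmemS₀] at ha ⊢
    exact ⟨inv_mem ha.1, by simpa using ha.2⟩
  -- existence of an inverse-closed subset of H \ {1} of size k
  have hA : ∃ A ⊆ S₀, (∀ a ∈ A, a⁻¹ ∈ A) ∧ A.card = k := by
    apply gen_sel S₀ hS₀inv k (by omega)
    rcases Nat.even_or_odd n with hne | hno
    · -- n even: H contains an involution
      right
      haveI : Fact (Nat.Prime 2) := ⟨Nat.prime_two⟩
      obtain ⟨x, hx⟩ := exists_prime_orderOf_dvd_card (G := H) 2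
        (by rw [← Nat.card_eq_fintype_card, ← hn]; exact hne.two_dvd)
      have hx1 : x ≠ 1 := by
        intro h; rw [h, orderOf_one] at hx; omega
      have hxx : x * x = 1 := by
        rw [← sq, ← hx, pow_orderOf_eq_one]
      have hxinv : x⁻¹ = x := inv_eq_of_mul_eq_one_right hxx
      refine ⟨(x : G), ?_, ?_⟩
      · rw [hmemS₀]
        exact ⟨x.2, by simpa using hx1⟩
      · rw [← Subgroup.coe_inv, hxinv]
    · -- n odd: gcd 2 (n-1) = 2 divides κ
      left
      have h2 : Nat.gcd 2 (n - 1) = 2 := by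
        obtain ⟨m, hm⟩ := hno
        exact Nat.gcd_eq_left (by omega)
      rw [h2] at hgcd
      have : Even κ := by
        obtain ⟨c, hc⟩ := hgcd
        exact ⟨c, by push_cast at hc ⊢; omega⟩
      rw [← hκk] at this
      exact Int.even_coe_nat k |>.mp this
  obtain ⟨A, hAS₀, hAinv, hAcard⟩ := hA
  -- the quotient group and cosets
  haveI : Fintype (G ⧸ H) := Fintype.ofFinite _
  set ord : G ⧸ H → ℕ := fun q => (Fintype.equivFin (G ⧸ H) q : ℕ) with hord
  have hordinj : Function.Injective ord :=
    Fin.val_injective.comp (Fintype.equivFin (G ⧸ H)).injective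
  set C : G ⧸ H → Set G := fun q => {g : G | (g : G ⧸ H) = q} with hC
  set Cf : G ⧸ H → Finset G := fun q => (C q).toFinset with hCf
  have hmemCf : ∀ (q : G ⧸ H) (g : G), g ∈ Cf q ↔ (g : G ⧸ H) = q := by
    intro q g; simp [hCf, hC]
  have hCcard : ∀ q : G ⧸ H, (Cf q).card = n := by
    intro q
    obtain ⟨g₀, rfl⟩ := QuotientGroup.mk_surjective q
    have hCeq : C ((g₀ : G ⧸ H)) = (fun a => g₀ * a) '' (H : Set G) := by
      ext g
      simp only [hC, Set.mem_setOf_eq, Set.mem_image, SetLike.mem_coe]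
      constructor
      · intro h
        exact ⟨g₀⁻¹ * g, (QuotientGroup.eq).mp h.symm, by group⟩
      · rintro ⟨a, ha, rfl⟩
        rw [eq_comm]
        exact (QuotientGroup.eq).mpr (by simpa using ha)
    rw [hCf, ← Set.ncard_eq_toFinset_card', hCeq,
      Set.ncard_image_of_injective _ (mul_right_injective g₀),
      ← Nat.card_coe_set_eq, hn]
    rfl
  have hCinv : ∀ (q : G ⧸ H) (g : G), g ∈ Cf q → g⁻¹ ∈ Cf q⁻¹ := by
    intro q g hg
    rw [hmemCf] at hg ⊢
    rw [QuotientGroup.mk_inv, hg]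
  -- choose the per-coset sets
  have hpk : ∀ q : G ⧸ H, ∃ T : Finset G, T ⊆ Cf q ∧ T.card = t ∧
      (q⁻¹ = q → ∀ a ∈ T, a⁻¹ ∈ T) := by
    intro q
    by_cases hq : q⁻¹ = q
    · obtain ⟨T, h1, h2, h3⟩ := gen_sel (Cf q)
        (fun a ha => by simpa [hq] using hCinv q a ha) t
        (by rw [hCcard]; exact htn) (Or.inl hteven)
      exact ⟨T, h1, h3, fun _ => h2⟩
    · obtain ⟨T, h1, h2⟩ := Finset.exists_subset_card_eq (s := Cf q) (n := t) (by rw [hCcard]; exact htn)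
      exact ⟨T, h1, h2, fun h => absurd h hq⟩
  choose pk hpk1 hpk2 hpk3 using hpk
  set f : G ⧸ H → Finset G :=
    fun q => if q⁻¹ = q then pk q else
      if ord q ≤ ord q⁻¹ then pk q else (pk q⁻¹).image (·⁻¹) with hf
  have hfsub : ∀ q : G ⧸ H, f q ⊆ Cf q := by
    intro q
    simp only [hf]
    split_ifs with h1 h2
    · exact hpk1 q
    · exact hpk1 q
    · intro a ha
      simp only [Finset.mem_image] at ha
      obtain ⟨b, hb, rfl⟩ := ha
      simpa using hCinv q⁻¹ b (hpk1 q⁻¹ hb)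
  have hfcard : ∀ q : G ⧸ H, (f q).card = t := by
    intro q
    simp only [hf]
    split_ifs with h1 h2
    · exact hpk2 q
    · exact hpk2 q
    · rw [Finset.card_image_of_injective _ inv_injective]; exact hpk2 q⁻¹
  have hfinv : ∀ (q : G ⧸ H) (a : G), a ∈ f q → a⁻¹ ∈ f q⁻¹ := by
    intro q a ha
    by_cases h1 : q⁻¹ = q
    · simp only [hf, if_pos h1] at ha
      rw [h1]
      simp only [hf, if_pos h1]
      exact hpk3 q h1 a ha
    · have h1' : ¬ (q⁻¹)⁻¹ = q⁻¹ := by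
        rw [inv_inv]; exact fun h => h1 h.symm
      have hne : ord q ≠ ord q⁻¹ := fun he => h1 (hordinj he).symm
      by_cases h2 : ord q ≤ ord q⁻¹
      · have h2' : ¬ ord q⁻¹ ≤ ord (q⁻¹)⁻¹ := by
          rw [inv_inv]; omega
        simp only [hf, if_neg h1, if_pos h2] at ha
        simp only [hf, if_neg h1', if_neg h2']
        rw [inv_inv, Finset.mem_image]
        exact ⟨a, ha, rfl⟩
      · have h2' : ord q⁻¹ ≤ ord (q⁻¹)⁻¹ := by
          rw [inv_inv]; omega
        simp only [hf, if_neg h1, if_neg h2, Finset.mem_image] at ha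
        obtain ⟨b, hb, rfl⟩ := ha
        simp only [hf, if_neg h1', if_pos h2']
        simpa using hb
  -- the connection set
  set X : Set G := ↑A ∪ {g : G | g ∉ H ∧ g ∈ f ((g : G ⧸ H))} with hX
  have hmemH_X : ∀ h : G, h ∈ H → (h ∈ X ↔ h ∈ A) := by
    intro h hh
    constructor
    · rintro (h1 | h1)
      · exact h1
      · exact absurd hh h1.1
    · intro h1; exact Or.inl h1
  have hmemnH_X : ∀ g : G, g ∉ H → (g ∈ X ↔ g ∈ f ((g : G ⧸ H))) := by
    intro g hg
    constructor
    · rintro (h1 | h1)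
      · exact absurd ((hmemS₀ g).mp (hAS₀ h1)).1 hg
      · exact h1.2
    · intro h1; exact Or.inr ⟨hg, h1⟩
  have hXinvmem : ∀ g : G, g ∈ X → g⁻¹ ∈ X := by
    rintro g (h1 | h1)
    · exact Or.inl (hAinv g h1)
    · refine Or.inr ⟨fun h => h1.1 (by simpa using inv_mem h), ?_⟩
      have := hfinv _ _ h1.2
      simpa [QuotientGroup.mk_inv] using this
  refine ⟨X, ⟨?_, ?_⟩, ?_, ?_⟩
  · -- 1 ∉ X
    rintro (h1 | h1)
    · exact ((hmemS₀ 1).mp (hAS₀ h1)).2 rfl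
    · exact h1.1 H.one_mem
  · -- X⁻¹ = X
    ext x
    rw [Set.mem_inv]
    constructor
    · intro h; simpa using hXinvmem _ h
    · intro h; exact hXinvmem _ h
  · -- vertices in H
    intro r hr
    have hss : {s ∈ (H : Set G) | r⁻¹ * s ∈ X} = (fun a => r * a) '' (↑A : Set G) := by
      ext s
      simp only [Set.mem_setOf_eq, Set.mem_image, Finset.coe_sort_coe, Finset.mem_coe,
        SetLike.mem_coe]
      constructor
      · rintro ⟨hs, hX⟩
        have hin : r⁻¹ * s ∈ H := H.mul_mem (inv_mem hr) hs
        exact ⟨r⁻¹ * s, (hmemH_X _ hin).mp hX, by group⟩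
      · rintro ⟨a, ha, rfl⟩
        have haH : a ∈ H := ((hmemS₀ a).mp (hAS₀ ha)).1
        refine ⟨H.mul_mem hr haH, ?_⟩
        have : r⁻¹ * (r * a) = a := by group
        rw [this]
        exact Or.inl ha
    rw [hss, Set.ncard_image_of_injective _ (mul_right_injective r),
      Set.ncard_coe_finset, hAcard, hκk]
  · -- vertices outside H
    intro g hg
    set q : G ⧸ H := ((g : G ⧸ H))⁻¹ with hq
    have hq1 : q ≠ 1 := by
      simp only [hq, ne_eq, inv_eq_one]
      rw [QuotientGroup.eq_one_iff]
      exact hg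
    have hss : {s ∈ (H : Set G) | g⁻¹ * s ∈ X} = (fun a => g * a) '' (↑(f q) : Set G) := by
      ext s
      simp only [Set.mem_setOf_eq, Set.mem_image, Finset.mem_coe, SetLike.mem_coe]
      constructor
      · rintro ⟨hs, hXs⟩
        have hmk : ((g⁻¹ * s : G) : G ⧸ H) = q := by
          rw [QuotientGroup.mk_mul, QuotientGroup.mk_inv, hq,
            (QuotientGroup.eq_one_iff s).mpr hs]
          group
        have hnH : g⁻¹ * s ∉ H := by
          intro h
          exact hq1 (by rw [← hmk, QuotientGroup.eq_one_iff]; exact h)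
        have := (hmemnH_X _ hnH).mp hXs
        rw [hmk] at this
        exact ⟨g⁻¹ * s, this, by group⟩
      · rintro ⟨a, ha, rfl⟩
        have haC : ((a : G) : G ⧸ H) = q := (hmemCf q a).mp (hfsub q ha)
        have haH : a ∉ H := by
          intro h
          exact hq1 (by rw [← haC, QuotientGroup.eq_one_iff]; exact h)
        constructor
        · rw [← QuotientGroup.eq_one_iff, QuotientGroup.mk_mul, haC, hq]
          group
        · have : g⁻¹ * (g * a) = a := by group
          rw [this]
          exact (hmemnH_X a haH).mpr (by rw [haC]; exact ha)
    rw [hss, Set.ncard_image_of_injective _ (mul_right_injective g),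
      Set.ncard_coe_finset, hfcard, hτt]
end

section
/- Let G be a finite group, H a non-trivial normal subgroup of G, and let κ and τ be integers satisfying 0 ≤ κ ≤ |H| − 1, 1 ≤ τ ≤ |H| and gcd(2, |H| − 1) ∣ κ. If τ is odd, then H is a (κ,τ)-regular set of G if and only if H is a perfect code of G. -/
open Pointwise

namespace RegAux

variable {G : Type*} [Group G]


variable {G : Type*} [Group G]

lemma inv_eq_of_mem_inv {S : Set G} (h : ∀ x ∈ S, x⁻¹ ∈ S) : S⁻¹ = S := by
  ext x
  simp only [Set.mem_inv]
  exact ⟨fun hx => by simpa using h _ hx, fun hx => h x hx⟩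

lemma mem_inv_self {S : Set G} (h : S⁻¹ = S) {x : G} (hx : x ∈ S) : x⁻¹ ∈ S := by
  rw [← h, Set.mem_inv, inv_inv]; exact hx

lemma even_ncard_aux [Finite G] :
    ∀ (n : ℕ) (T : Set G), T.ncard = n → T⁻¹ = T → (∀ z ∈ T, z⁻¹ ≠ z) → Even n := by
  intro n
  induction n using Nat.strong_induction_on with
  | _ n ih =>
    intro T hn hTinv hfix
    rcases T.eq_empty_or_nonempty with rfl | ⟨z, hz⟩
    · simp only [Set.ncard_empty] at hn; simp [← hn]
    · have hz' : z⁻¹ ∈ T := mem_inv_self hTinv hz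
      have hzz : z⁻¹ ≠ z := hfix z hz
      have hsub : ({z, z⁻¹} : Set G) ⊆ T := by
        rw [Set.insert_subset_iff, Set.singleton_subset_iff]; exact ⟨hz, hz'⟩
      have hpair : ({z, z⁻¹} : Set G).ncard = 2 := Set.ncard_pair hzz.symm
      have hT2 : 2 ≤ n := by
        rw [← hn, ← hpair]; exact Set.ncard_le_ncard hsub (Set.toFinite T)
      have hn' : (T \ {z, z⁻¹}).ncard = n - 2 := by
        rw [Set.ncard_diff hsub, hpair, hn]
      have hT'inv : (T \ {z, z⁻¹})⁻¹ = T \ {z, z⁻¹} := by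
        apply inv_eq_of_mem_inv
        rintro x ⟨hxT, hxp⟩
        refine ⟨mem_inv_self hTinv hxT, fun hmem => hxp ?_⟩
        rcases hmem with h1 | h1
        · right; rw [inv_eq_iff_eq_inv] at h1; exact h1
        · left; rw [Set.mem_singleton_iff] at h1; rw [inv_eq_iff_eq_inv] at h1
          simpa using h1
      have hfix' : ∀ x ∈ T \ ({z, z⁻¹} : Set G), x⁻¹ ≠ x := fun x hx => hfix x hx.1
      have hev := ih (n - 2) (by omega) _ hn' hT'inv hfix'
      obtain ⟨m, hm⟩ := hev
      exact ⟨m + 1, by omega⟩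

lemma even_ncard_of_nofix [Finite G] (T : Set G) (hTinv : T⁻¹ = T)
    (hfix : ∀ z ∈ T, z⁻¹ ≠ z) : Even T.ncard :=
  even_ncard_aux T.ncard T rfl hTinv hfix

lemma exists_even_symm [Finite G] :
    ∀ (j : ℕ) (T : Set G), T⁻¹ = T → (∀ z ∈ T, z⁻¹ ≠ z) → 2 * j ≤ T.ncard →
      ∃ S, S ⊆ T ∧ S⁻¹ = S ∧ S.ncard = 2 * j := by
  intro j
  induction j with
  | zero => exact fun T _ _ _ => ⟨∅, Set.empty_subset T, by simp, by simp⟩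
  | succ j ihj =>
    intro T hTinv hfix hle
    obtain ⟨z, hz⟩ : T.Nonempty := Set.nonempty_of_ncard_ne_zero (by omega)
    have hz' : z⁻¹ ∈ T := mem_inv_self hTinv hz
    have hzz : z⁻¹ ≠ z := hfix z hz
    have hsub : ({z, z⁻¹} : Set G) ⊆ T := by
      rw [Set.insert_subset_iff, Set.singleton_subset_iff]; exact ⟨hz, hz'⟩
    have hpair : ({z, z⁻¹} : Set G).ncard = 2 := Set.ncard_pair hzz.symm
    have hn' : (T \ {z, z⁻¹}).ncard = T.ncard - 2 := by
      rw [Set.ncard_diff hsub, hpair]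
    have hT'inv : (T \ {z, z⁻¹})⁻¹ = T \ {z, z⁻¹} := by
      apply inv_eq_of_mem_inv
      rintro x ⟨hxT, hxp⟩
      refine ⟨mem_inv_self hTinv hxT, fun hmem => hxp ?_⟩
      rcases hmem with h1 | h1
      · right; rw [inv_eq_iff_eq_inv] at h1; exact h1
      · left; rw [Set.mem_singleton_iff] at h1; rw [inv_eq_iff_eq_inv] at h1
        simpa using h1
    have hfix' : ∀ x ∈ T \ ({z, z⁻¹} : Set G), x⁻¹ ≠ x := fun x hx => hfix x hx.1
    obtain ⟨S', hS'sub, hS'inv, hS'card⟩ := ihj (T \ {z, z⁻¹}) hT'inv hfix' (by omega)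
    have hdisj : Disjoint S' ({z, z⁻¹} : Set G) :=
      (Set.disjoint_sdiff_left).mono_left hS'sub
    refine ⟨S' ∪ {z, z⁻¹}, ?_, ?_, ?_⟩
    · exact Set.union_subset (hS'sub.trans Set.diff_subset) hsub
    · apply inv_eq_of_mem_inv
      rintro x (hx | hx)
      · exact Or.inl (mem_inv_self hS'inv hx)
      · rcases hx with rfl | hx
        · exact Or.inr (Or.inr rfl)
        · rw [Set.mem_singleton_iff] at hx; subst hx
          exact Or.inr (Or.inl (inv_inv z))
    · rw [Set.ncard_union_eq hdisj, hS'card, hpair]; ring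

lemma exists_symm_subset [Finite G] (T : Set G) (hTinv : T⁻¹ = T) (k : ℕ)
    (hk : k ≤ T.ncard) (hfx : Even k ∨ ∃ z ∈ T, z⁻¹ = z) :
    ∃ S, S ⊆ T ∧ S⁻¹ = S ∧ S.ncard = k := by
  classical
  set F := {z ∈ T | z⁻¹ = z} with hF
  have hFsub : F ⊆ T := Set.sep_subset _ _
  set P := T \ F with hP
  have hPinv : P⁻¹ = P := by
    apply inv_eq_of_mem_inv
    rintro x ⟨hxT, hxF⟩
    refine ⟨mem_inv_self hTinv hxT, fun hc => hxF ?_⟩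
    exact ⟨hxT, ((by simpa using hc.2 : x = x⁻¹)).symm⟩
  have hPfix : ∀ z ∈ P, z⁻¹ ≠ z := fun z hz h => hz.2 ⟨hz.1, h⟩
  have hPeven : Even P.ncard := even_ncard_of_nofix P hPinv hPfix
  obtain ⟨p2, hp2⟩ := hPeven
  have hsplit : T.ncard = F.ncard + P.ncard := by
    have h1 := Set.ncard_diff hFsub (Set.toFinite F)
    have h2 := Set.ncard_le_ncard hFsub (Set.toFinite T)
    rw [hP]; omega
  have hdisjF : k % 2 = 0 ∨ 1 ≤ F.ncard := by
    rcases hfx with he | ⟨z, hzT, hzf⟩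
    · left; exact Nat.even_iff.mp he
    · right
      have : F.Nonempty := ⟨z, hzT, hzf⟩
      have := (Set.ncard_pos (Set.toFinite F)).mpr this
      omega
  obtain ⟨a, ha1, ha2, ha3, ha4⟩ :
      ∃ a, a ≤ F.ncard ∧ a ≤ k ∧ k - a ≤ P.ncard ∧ (k - a) % 2 = 0 := by
    rcases hdisjF with h | h
    · by_cases hc : P.ncard ≤ k
      · exact ⟨k - P.ncard, by omega, by omega, by omega, by omega⟩
      · exact ⟨0, by omega, by omega, by omega, by omega⟩
    · by_cases hc : P.ncard ≤ k
      · exact ⟨k - P.ncard, by omega, by omega, by omega, by omega⟩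
      · exact ⟨k % 2, by omega, by omega, by omega, by omega⟩
  obtain ⟨A, hAsub, hAcard⟩ := Set.exists_subset_card_eq ((ha1 : a ≤ F.ncard))
  have hAinv : A⁻¹ = A := inv_eq_of_mem_inv fun x hx => by
    rw [(hAsub hx).2]; exact hx
  obtain ⟨j, hjeq⟩ : ∃ j, k - a = 2 * j := ⟨(k - a) / 2, by omega⟩
  obtain ⟨B, hBsub, hBinv, hBcard⟩ := exists_even_symm j P hPinv hPfix (by omega)
  have hdisjAB : Disjoint A B :=
    (Set.disjoint_sdiff_right).mono hAsub hBsub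
  refine ⟨A ∪ B, Set.union_subset (hAsub.trans hFsub) (hBsub.trans Set.diff_subset), ?_, ?_⟩
  · apply inv_eq_of_mem_inv
    rintro x (hx | hx)
    · exact Or.inl (mem_inv_self hAinv hx)
    · exact Or.inr (mem_inv_self hBinv hx)
  · rw [Set.ncard_union_eq hdisjAB, hAcard, hBcard]; omega




def cosetS (H : Subgroup G) (C : G ⧸ H) : Set G := {x : G | (x : G ⧸ H) = C}

lemma mem_cosetS {H : Subgroup G} {C : G ⧸ H} {x : G} :
    x ∈ cosetS H C ↔ (x : G ⧸ H) = C := Iff.rfl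

lemma cosetS_one (H : Subgroup G) [H.Normal] : cosetS H (1 : G ⧸ H) = (H : Set G) := by
  ext x; exact QuotientGroup.eq_one_iff x

lemma cosetS_inv (H : Subgroup G) [H.Normal] (C : G ⧸ H) :
    (cosetS H C)⁻¹ = cosetS H C⁻¹ := by
  ext x
  simp only [Set.mem_inv, mem_cosetS, QuotientGroup.mk_inv]
  exact inv_eq_iff_eq_inv

lemma cosetS_ncard (H : Subgroup G) [H.Normal] (C : G ⧸ H) :
    (cosetS H C).ncard = Nat.card H := by
  obtain ⟨g, rfl⟩ := QuotientGroup.mk_surjective C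
  have h : cosetS H (g : G ⧸ H) = g • (H : Set G) := by
    ext x
    rw [mem_cosetS, Set.mem_smul_set_iff_inv_smul_mem, smul_eq_mul, SetLike.mem_coe]
    exact ⟨fun h => QuotientGroup.eq.mp h.symm, fun h => (QuotientGroup.eq.mpr h).symm⟩
  rw [h, Set.ncard_smul_set, ← Nat.card_coe_set_eq, SetLike.coe_sort_coe]

lemma count_eq (H : Subgroup G) [H.Normal] (X : Set G) (g : G) :
    {s ∈ (H : Set G) | g⁻¹ * s ∈ X}.ncard = (X ∩ cosetS H ((g : G ⧸ H))⁻¹).ncard := by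
  have key : {s ∈ (H : Set G) | g⁻¹ * s ∈ X} = g • (X ∩ cosetS H ((g : G ⧸ H))⁻¹) := by
    ext x
    rw [Set.mem_smul_set_iff_inv_smul_mem, smul_eq_mul, Set.mem_inter_iff, mem_cosetS]
    have aux : x ∈ (H : Set G) ↔ ((g⁻¹ * x : G) : G ⧸ H) = (g : G ⧸ H)⁻¹ := by
      rw [QuotientGroup.mk_mul, QuotientGroup.mk_inv, mul_eq_left,
        SetLike.mem_coe]
      exact (QuotientGroup.eq_one_iff x).symm
    constructor
    · rintro ⟨hxH, hxX⟩; exact ⟨hxX, aux.mp hxH⟩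
    · rintro ⟨hxX, hc⟩; exact ⟨aux.mpr hc, hxX⟩
  rw [key, Set.ncard_smul_set]

lemma regular_iff (H : Subgroup G) [H.Normal] (X : Set G) (κ τ : ℤ) :
    IsRegularSetOfCayley X (H : Set G) κ τ ↔
      ((X ∩ (H : Set G)).ncard : ℤ) = κ ∧
        ∀ C : G ⧸ H, C ≠ 1 → ((X ∩ cosetS H C).ncard : ℤ) = τ := by
  constructor
  · rintro ⟨h1, h2⟩
    constructor
    · have := h1 1 (H.one_mem)
      rw [count_eq] at this
      simpa [cosetS_one] using this
    · intro C hC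
      obtain ⟨g, hg⟩ := QuotientGroup.mk_surjective C⁻¹
      have hgH : g ∉ (H : Set G) := by
        intro hmem
        apply hC
        rw [(QuotientGroup.eq_one_iff g).mpr (SetLike.mem_coe.mp hmem)] at hg
        exact (inv_eq_one.mp hg.symm)
      have := h2 g hgH
      rw [count_eq, hg, inv_inv] at this
      exact this
  · rintro ⟨h1, h2⟩
    constructor
    · intro r hr
      rw [count_eq, (QuotientGroup.eq_one_iff r).mpr (SetLike.mem_coe.mp hr), inv_one,
        cosetS_one]
      exact h1
    · intro g hg
      rw [count_eq]
      apply h2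
      simp only [ne_eq, inv_eq_one]
      exact fun h => hg (SetLike.mem_coe.mpr ((QuotientGroup.eq_one_iff g).mp h))




lemma code_cond [Finite G] (H : Subgroup G) [H.Normal] {κ τ : ℤ} (hτodd : Odd τ)
    (hreg : IsRegularSetOfGroup (H : Set G) κ τ) :
    ∀ C : G ⧸ H, C ≠ 1 → C⁻¹ = C → ∃ z : G, (z : G ⧸ H) = C ∧ z⁻¹ = z := by
  obtain ⟨X, ⟨hX1, hXinv⟩, hX⟩ := hreg
  rw [regular_iff] at hX
  obtain ⟨-, h2⟩ := hX
  intro C hC hCinv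
  have hS := h2 C hC
  have hSinv : (X ∩ cosetS H C)⁻¹ = X ∩ cosetS H C := by
    rw [Set.inter_inv, hXinv, cosetS_inv, hCinv]
  have hodd : Odd (X ∩ cosetS H C).ncard := by
    rw [← Int.odd_coe_nat, hS]; exact hτodd
  by_contra hcon
  push_neg at hcon
  have hnofix : ∀ z ∈ X ∩ cosetS H C, z⁻¹ ≠ z := fun z hz =>
    hcon z (mem_cosetS.mp hz.2)
  exact (Nat.not_odd_iff_even.mpr (even_ncard_of_nofix _ hSinv hnofix)) hodd

lemma construct [Finite G] (H : Subgroup G) [H.Normal] (κ τ : ℤ)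
    (hκ0 : 0 ≤ κ) (hκ1 : κ ≤ (Nat.card H : ℤ) - 1)
    (hτ0 : 1 ≤ τ) (hτ1 : τ ≤ (Nat.card H : ℤ))
    (hgcd : ((Nat.gcd 2 (Nat.card H - 1) : ℕ) : ℤ) ∣ κ)
    (hτodd : Odd τ)
    (hP : ∀ C : G ⧸ H, C ≠ 1 → C⁻¹ = C → ∃ z : G, (z : G ⧸ H) = C ∧ z⁻¹ = z) :
    IsRegularSetOfGroup (H : Set G) κ τ := by
  classical
  have hn1 : 1 ≤ Nat.card H := Nat.card_pos
  obtain ⟨κ', rfl⟩ : ∃ k : ℕ, κ = (k : ℤ) := ⟨κ.toNat, (Int.toNat_of_nonneg hκ0).symm⟩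
  obtain ⟨τ', rfl⟩ : ∃ k : ℕ, τ = (k : ℤ) :=
    ⟨τ.toNat, (Int.toNat_of_nonneg (by omega)).symm⟩
  have hκn : κ' ≤ Nat.card H - 1 := by omega
  have hτn : τ' ≤ Nat.card H := by omega
  have hHcard : (H : Set G).ncard = Nat.card H := by
    rw [← Nat.card_coe_set_eq, SetLike.coe_sort_coe]
  -- the part of the connection set inside H
  have hT0inv : ((H : Set G) \ {1})⁻¹ = (H : Set G) \ {1} := by
    apply inv_eq_of_mem_inv
    rintro x ⟨hxH, hx1⟩
    refine ⟨SetLike.mem_coe.mpr (inv_mem (SetLike.mem_coe.mp hxH)), ?_⟩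
    simp only [Set.mem_singleton_iff, inv_eq_one] at *
    exact hx1
  have hT0card : ((H : Set G) \ {1}).ncard = Nat.card H - 1 := by
    rw [Set.ncard_diff (by simpa using H.one_mem : ({1} : Set G) ⊆ (H : Set G)),
      Set.ncard_singleton, hHcard]
  have hκdisj : Even κ' ∨ ∃ z ∈ (H : Set G) \ {1}, z⁻¹ = z := by
    by_cases he : Even κ'
    · exact Or.inl he
    · right
      have h2 : ¬ (2 ∣ (Nat.card H - 1)) := by
        intro hdvd
        rw [Nat.gcd_eq_left hdvd] at hgcd
        have h2' : 2 ∣ κ' := by exact_mod_cast hgcd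
        exact he (even_iff_two_dvd.mpr h2')
      have hodd : Odd (((H : Set G) \ {1}).ncard) := by
        rw [hT0card, Nat.odd_iff]; omega
      by_contra hc
      push_neg at hc
      exact (Nat.not_odd_iff_even.mpr (even_ncard_of_nofix _ hT0inv hc)) hodd
  obtain ⟨XH, hXHsub, hXHinv, hXHcard⟩ :=
    exists_symm_subset _ hT0inv κ' (by omega) hκdisj
  -- the parts of the connection set in nontrivial cosets
  have spec : ∀ C : G ⧸ H,
      ∃ S, S ⊆ cosetS H C ∧ S.ncard = τ' ∧ (C ≠ 1 → C⁻¹ = C → S⁻¹ = S) := by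
    intro C
    by_cases hc : C ≠ 1 ∧ C⁻¹ = C
    · obtain ⟨z, hz1, hz2⟩ := hP C hc.1 hc.2
      obtain ⟨S, h1, h2, h3⟩ := exists_symm_subset (cosetS H C)
        (by rw [cosetS_inv, hc.2]) τ' (by rw [cosetS_ncard]; exact hτn)
        (Or.inr ⟨z, mem_cosetS.mpr hz1, hz2⟩)
      exact ⟨S, h1, h3, fun _ _ => h2⟩
    · obtain ⟨S, h1, h2⟩ := Set.exists_subset_card_eq
        (show τ' ≤ (cosetS H C).ncard by rw [cosetS_ncard]; exact hτn)
      exact ⟨S, h1, h2, fun ha hb => absurd ⟨ha, hb⟩ hc⟩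
  choose pick hpick1 hpick2 hpick3 using spec
  set r : (G ⧸ H) → (G ⧸ H) → Prop := WellOrderingRel with hr
  have rasymm : ∀ {a b : G ⧸ H}, r a b → ¬ r b a := fun {a b} hab =>
    (WellOrderingRel.isWellOrder.wf.asymmetric a b) hab
  have rtrich : ∀ a b : G ⧸ H, a ≠ b → r a b ∨ r b a := by
    intro a b hab
    rcases @trichotomous_of (G ⧸ H) r WellOrderingRel.isWellOrder.toTrichotomous a b with
      h | h | h
    · exact Or.inl h
    · exact absurd h hab
    · exact Or.inr h
  set Sf : (G ⧸ H) → Set G := fun C =>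
    if C⁻¹ = C then pick C else if r C C⁻¹ then pick C else (pick C⁻¹)⁻¹ with hSf
  have key1 : ∀ C, Sf C ⊆ cosetS H C := by
    intro C
    rw [hSf]; dsimp only
    split_ifs with h1 h2
    · exact hpick1 C
    · exact hpick1 C
    · intro x hx
      have h := mem_cosetS.mp (hpick1 C⁻¹ (Set.mem_inv.mp hx))
      rw [mem_cosetS]
      rw [QuotientGroup.mk_inv] at h
      exact inv_injective h
  have key2 : ∀ C, (Sf C).ncard = τ' := by
    intro C
    rw [hSf]; dsimp only
    split_ifs
    · exact hpick2 C
    · exact hpick2 C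
    · rw [Set.ncard_inv]; exact hpick2 C⁻¹
  have key3 : ∀ C, C ≠ 1 → (Sf C)⁻¹ = Sf C⁻¹ := by
    intro C hC
    rw [hSf]; dsimp only
    by_cases h1 : C⁻¹ = C
    · rw [if_pos h1]
      have e : (C⁻¹)⁻¹ = C⁻¹ := by rw [inv_inv]; exact h1.symm
      rw [if_pos e, h1]
      exact hpick3 C hC h1
    · by_cases h2 : r C C⁻¹
      · rw [if_neg h1, if_pos h2]
        have h1' : ¬ ((C⁻¹)⁻¹ = C⁻¹) := by rw [inv_inv]; exact fun h => h1 h.symm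
        have h2' : ¬ r C⁻¹ (C⁻¹)⁻¹ := by rw [inv_inv]; exact rasymm h2
        rw [if_neg h1', if_neg h2', inv_inv]
      · have h3 : r C⁻¹ C := (rtrich C C⁻¹ (fun h => h1 h.symm)).resolve_left h2
        rw [if_neg h1, if_neg h2]
        have h1' : ¬ ((C⁻¹)⁻¹ = C⁻¹) := by rw [inv_inv]; exact fun h => h1 h.symm
        have h2' : r C⁻¹ (C⁻¹)⁻¹ := by rw [inv_inv]; exact h3
        rw [if_neg h1', if_pos h2', inv_inv]
  -- assemble the connection set
  set U : Set G := ⋃ C ∈ {D : G ⧸ H | D ≠ 1}, Sf C with hU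
  have hUmem : ∀ x, x ∈ U ↔ ∃ C : G ⧸ H, C ≠ 1 ∧ x ∈ Sf C := by
    intro x; rw [hU]; simp [Set.mem_iUnion]
  set X : Set G := XH ∪ U with hX
  have hXH_H : XH ⊆ (H : Set G) := fun x hx => (hXHsub hx).1
  have hinterH : X ∩ (H : Set G) = XH := by
    ext x
    constructor
    · rintro ⟨hxX, hxH⟩
      rcases hxX with hx | hx
      · exact hx
      · obtain ⟨C, hC, hxC⟩ := (hUmem x).mp hx
        have h1 : (x : G ⧸ H) = C := mem_cosetS.mp (key1 C hxC)
        have h2 : (x : G ⧸ H) = 1 := (QuotientGroup.eq_one_iff x).mpr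
          (SetLike.mem_coe.mp hxH)
        exact absurd (h1.symm.trans h2) hC
    · intro hx
      exact ⟨Or.inl hx, hXH_H hx⟩
  have hinterC : ∀ C : G ⧸ H, C ≠ 1 → X ∩ cosetS H C = Sf C := by
    intro C hC
    ext x
    constructor
    · rintro ⟨hxX, hxC⟩
      have hxC' : (x : G ⧸ H) = C := mem_cosetS.mp hxC
      rcases hxX with hx | hx
      · have : (x : G ⧸ H) = 1 := (QuotientGroup.eq_one_iff x).mpr
          (SetLike.mem_coe.mp (hXH_H hx))
        exact absurd (hxC'.symm.trans this) hC
      · obtain ⟨D, hD, hxD⟩ := (hUmem x).mp hx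
        have hDC : D = C := (mem_cosetS.mp (key1 D hxD)).symm.trans hxC'
        exact hDC ▸ hxD
    · intro hx
      exact ⟨Or.inr ((hUmem x).mpr ⟨C, hC, hx⟩), key1 C hx⟩
  have h1X : (1 : G) ∉ X := by
    rintro (h | h)
    · exact (hXHsub h).2 rfl
    · obtain ⟨C, hC, hxC⟩ := (hUmem 1).mp h
      have : ((1 : G) : G ⧸ H) = C := mem_cosetS.mp (key1 C hxC)
      rw [QuotientGroup.mk_one] at this
      exact hC this.symm
  have hXinv : X⁻¹ = X := by
    apply inv_eq_of_mem_inv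
    rintro x (hx | hx)
    · exact Or.inl (mem_inv_self hXHinv hx)
    · obtain ⟨C, hC, hxC⟩ := (hUmem x).mp hx
      refine Or.inr ((hUmem x⁻¹).mpr ⟨C⁻¹, fun h => hC (inv_eq_one.mp h), ?_⟩)
      rw [← key3 C hC, Set.mem_inv, inv_inv]
      exact hxC
  refine ⟨X, ⟨h1X, hXinv⟩, (regular_iff H X _ _).mpr ⟨?_, ?_⟩⟩
  · rw [hinterH, hXHcard]
  · intro C hC
    rw [hinterC C hC, key2 C]


end RegAux

theorem statement_1 {G : Type*} [Group G] [Fintype G] (H : Subgroup G) [H.Normal]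
    (hH : H ≠ ⊥) (κ τ : ℤ)
    (hκ0 : 0 ≤ κ) (hκ1 : κ ≤ (Nat.card H : ℤ) - 1)
    (hτ0 : 1 ≤ τ) (hτ1 : τ ≤ (Nat.card H : ℤ))
    (hgcd : ((Nat.gcd 2 (Nat.card H - 1) : ℕ) : ℤ) ∣ κ)
    (hτodd : Odd τ) :
    IsRegularSetOfGroup (H : Set G) κ τ ↔ IsPerfectCodeOfGroup (H : Set G) := by
  have hn1 : 1 ≤ Nat.card H := Nat.card_pos
  constructor
  · intro hreg
    exact RegAux.construct H 0 1 le_rfl (by push_cast; omega) le_rfl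
      (by push_cast; omega) (dvd_zero _) odd_one
      (RegAux.code_cond H hτodd hreg)
  · intro hpc
    exact RegAux.construct H κ τ hκ0 hκ1 hτ0 hτ1 hgcd hτodd
      (RegAux.code_cond H odd_one hpc)
end

section
/- Let G be a finite group and H a non-trivial normal subgroup of G of odd order. Then H is a (κ,τ)-regular set of G for every pair of integers κ and τ satisfying 0 ≤ κ ≤ |H| − 1, 1 ≤ τ ≤ |H| and gcd(2, |H| − 1) ∣ κ. -/
open Pointwise

lemma lemC {G : Type*} [Group G] [DecidableEq G] (S : Finset G) :
    (∀ x ∈ S, x⁻¹ ∈ S) → (∀ x ∈ S, x⁻¹ ≠ x) → Even S.card := by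
  induction S using Finset.strongInduction with
  | _ S IH =>
    intro hinv hnf
    rcases S.eq_empty_or_nonempty with rfl | ⟨y, hyS⟩
    · simp
    · have hy : y⁻¹ ≠ y := hnf y hyS
      have hyy : y⁻¹ ∈ S := hinv y hyS
      set S' := S \ {y, y⁻¹} with hS'
      have hsub : {y, y⁻¹} ⊆ S := by
        intro x hx
        rcases Finset.mem_insert.mp hx with rfl | hx
        · exact hyS
        · rw [Finset.mem_singleton.mp hx]; exact hyy
      have hssub : S' ⊂ S := by
        refine Finset.sdiff_ssubset hsub ?_
        exact ⟨y, Finset.mem_insert_self _ _⟩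
      have hcard : S'.card = S.card - 2 := by
        rw [Finset.card_sdiff_of_subset hsub, Finset.card_pair (Ne.symm hy)]
      have hinv' : ∀ x ∈ S', x⁻¹ ∈ S' := by
        intro x hx
        simp only [hS', Finset.mem_sdiff, Finset.mem_insert, Finset.mem_singleton] at hx ⊢
        obtain ⟨hxS, hxne⟩ := hx
        push_neg at hxne
        refine ⟨hinv x hxS, ?_⟩
        rintro (h | h)
        · exact hxne.2 (by rw [← h, inv_inv])
        · exact hxne.1 (inv_injective h)
      have hnf' : ∀ x ∈ S', x⁻¹ ≠ x := fun x hx => hnf x (Finset.mem_sdiff.mp hx).1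
      have hev := IH S' hssub hinv' hnf'
      have h2 : 2 ≤ S.card := by
        have := Finset.card_le_card hsub
        rwa [Finset.card_pair (Ne.symm hy)] at this
      obtain ⟨m, hm⟩ := hev
      exact ⟨m + 1, by omega⟩

lemma lemB {G : Type*} [Group G] [DecidableEq G] (k : ℕ) :
    ∀ (S : Finset G), (∀ x ∈ S, x⁻¹ ∈ S) → k ≤ S.card →
    (Even k ∨ ∃ x ∈ S, x⁻¹ = x) →
    ∃ T, T ⊆ S ∧ (∀ x ∈ T, x⁻¹ ∈ T) ∧ T.card = k := by
  induction k using Nat.strong_induction_on with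
  | _ k IH =>
    intro S hinv hk hpar
    by_cases hall : ∀ x ∈ S, x⁻¹ = x
    · obtain ⟨T, hTS, hTc⟩ := Finset.exists_subset_card_eq hk
      exact ⟨T, hTS, fun x hx => by rw [hall x (hTS hx)]; exact hx, hTc⟩
    · push_neg at hall
      obtain ⟨y, hyS, hy⟩ := hall
      rcases k with _ | _ | k
      · exact ⟨∅, Finset.empty_subset _, by simp, rfl⟩
      · rcases hpar with he | ⟨x, hxS, hx⟩
        · exact absurd he (by simp)
        · exact ⟨{x}, Finset.singleton_subset_iff.mpr hxS,
            by simp [hx], rfl⟩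
      · have hyy : y⁻¹ ∈ S := hinv y hyS
        set S' := S \ {y, y⁻¹} with hS'
        have hsub : {y, y⁻¹} ⊆ S := by
          intro x hx
          rcases Finset.mem_insert.mp hx with rfl | hx
          · exact hyS
          · rw [Finset.mem_singleton.mp hx]; exact hyy
        have hcard : S'.card = S.card - 2 := by
          rw [Finset.card_sdiff_of_subset hsub, Finset.card_pair (Ne.symm hy)]
        have hinv' : ∀ x ∈ S', x⁻¹ ∈ S' := by
          intro x hx
          simp only [hS', Finset.mem_sdiff, Finset.mem_insert, Finset.mem_singleton] at hx ⊢
          obtain ⟨hxS, hxne⟩ := hx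
          push_neg at hxne
          refine ⟨hinv x hxS, ?_⟩
          rintro (h | h)
          · exact hxne.2 (by rw [← h, inv_inv])
          · exact hxne.1 (inv_injective h)
        have hpar' : Even k ∨ ∃ x ∈ S', x⁻¹ = x := by
          rcases hpar with ⟨m, hm⟩ | ⟨x, hxS, hx⟩
          · exact Or.inl ⟨m - 1, by omega⟩
          · refine Or.inr ⟨x, ?_, hx⟩
            simp only [hS', Finset.mem_sdiff, Finset.mem_insert, Finset.mem_singleton]
            refine ⟨hxS, ?_⟩
            push_neg
            constructor
            · rintro rfl; exact hy hx
            · rintro rfl; exact hy (by rw [← hx, inv_inv])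
        obtain ⟨T', hT'S, hT'inv, hT'c⟩ := IH k (by omega) S' hinv'
          (by omega) hpar'
        have hyT' : y ∉ T' := fun h => by
          have := hT'S h
          simp [hS'] at this
        have hyyT' : y⁻¹ ∉ T' := fun h => by
          have := hT'S h
          simp [hS'] at this
        refine ⟨insert y (insert y⁻¹ T'), ?_, ?_, ?_⟩
        · intro x hx
          rcases Finset.mem_insert.mp hx with rfl | hx
          · exact hyS
          rcases Finset.mem_insert.mp hx with rfl | hx
          · exact hyy
          · exact (Finset.sdiff_subset.trans (le_refl S)) (hT'S hx)
        · intro x hx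
          rcases Finset.mem_insert.mp hx with rfl | hx
          · exact Finset.mem_insert_of_mem (Finset.mem_insert_self _ _)
          rcases Finset.mem_insert.mp hx with rfl | hx
          · rw [inv_inv]; exact Finset.mem_insert_self _ _
          · exact Finset.mem_insert_of_mem (Finset.mem_insert_of_mem (hT'inv x hx))
        · rw [Finset.card_insert_of_notMem, Finset.card_insert_of_notMem hyyT', hT'c]
          simp only [Finset.mem_insert]
          push_neg
          exact ⟨Ne.symm hy, hyT'⟩

theorem statement_2 {G : Type*} [Group G] [Fintype G] (H : Subgroup G) [H.Normal]
    (hH : H ≠ ⊥) (hodd : Odd (Nat.card H)) (κ τ : ℤ)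
    (hκ0 : 0 ≤ κ) (hκ1 : κ ≤ (Nat.card H : ℤ) - 1)
    (hτ0 : 1 ≤ τ) (hτ1 : τ ≤ (Nat.card H : ℤ))
    (hgcd : ((Nat.gcd 2 (Nat.card H - 1) : ℕ) : ℤ) ∣ κ) :
    IsRegularSetOfGroup (H : Set G) κ τ := by
  classical
  set n := Nat.card H with hn
  have hn1 : 1 ≤ n := Nat.one_le_iff_ne_zero.mpr (by rintro h; simp [h] at hodd)
  -- natural number versions of κ and τ
  set κn := κ.toNat with hκn
  set τn := τ.toNat with hτn
  have hκcast : (κn : ℤ) = κ := Int.toNat_of_nonneg hκ0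
  have hτcast : (τn : ℤ) = τ := Int.toNat_of_nonneg (le_trans one_pos.le hτ0)
  have hκle : κn ≤ n - 1 := by omega
  have hτle : τn ≤ n := by omega
  have hκeven : Even κn := by
    have h2 : (2 : ℕ) ∣ n - 1 := by
      have := Nat.odd_iff.mp hodd; omega
    rw [Nat.gcd_eq_left h2] at hgcd
    have : (2 : ℤ) ∣ (κn : ℤ) := by rw [hκcast]; exact_mod_cast hgcd
    have h2' : (2:ℕ) ∣ κn := by exact_mod_cast this
    exact Nat.even_iff.mpr (by omega)
  -- quotient
  letI : Fintype (G ⧸ H) := Fintype.ofFinite _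
  have hπ : ∀ a b : G, (QuotientGroup.mk (a * b) : G ⧸ H) = QuotientGroup.mk a * QuotientGroup.mk b := fun a b => rfl
  have hπinv : ∀ a : G, (QuotientGroup.mk a⁻¹ : G ⧸ H) = (QuotientGroup.mk a)⁻¹ := fun a => rfl
  let F : G ⧸ H → Finset G := fun q => Finset.univ.filter (fun g => (QuotientGroup.mk g : G ⧸ H) = q)
  have hmemF : ∀ (q : G ⧸ H) (g : G), g ∈ F q ↔ QuotientGroup.mk g = q := by intro q g; simp [F]
  have hmemF1 : ∀ g, g ∈ F 1 ↔ g ∈ H := by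
    intro g; rw [hmemF]; exact QuotientGroup.eq_one_iff g
  have hcardF1 : (F 1).card = n := by
    have : F 1 = (H : Set G).toFinset := by
      ext g; simp [hmemF1 g]
    rw [this, Set.toFinset_card, hn, Nat.card_eq_fintype_card]
    exact Fintype.card_congr (Equiv.refl _)
  have hcardF : ∀ q, (F q).card = n := by
    intro q
    obtain ⟨g, rfl⟩ := QuotientGroup.mk_surjective q
    rw [← hcardF1]
    apply Finset.card_bij' (fun x _ => g⁻¹ * x) (fun x _ => g * x)
    · intro x hx
      rw [hmemF] at hx
      rw [hmemF1, ← QuotientGroup.eq_one_iff, hπ, hπinv, hx]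
      simp
    · intro x hx
      rw [hmemF1, ← QuotientGroup.eq_one_iff] at hx
      rw [hmemF, hπ, hx, mul_one]
    · intro x _; simp
    · intro x _; simp
  -- the set A within H
  set S1 := (F 1).erase 1 with hS1
  have hS1card : S1.card = n - 1 := by
    rw [hS1, Finset.card_erase_of_mem, hcardF1]
    rw [hmemF1]; exact H.one_mem
  have hS1inv : ∀ x ∈ S1, x⁻¹ ∈ S1 := by
    intro x hx
    rw [hS1, Finset.mem_erase, hmemF1] at hx ⊢
    exact ⟨inv_ne_one.mpr hx.1, H.inv_mem hx.2⟩
  have hS1nf : ∀ x ∈ S1, x⁻¹ ≠ x := by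
    intro x hx heq
    rw [hS1, Finset.mem_erase, hmemF1] at hx
    have hord : orderOf x = 2 := by
      apply orderOf_eq_prime
      · rw [pow_two]; exact mul_eq_one_iff_eq_inv.mpr heq.symm
      · exact hx.1
    have : orderOf (⟨x, hx.2⟩ : H) = 2 := by
      rwa [← Subgroup.orderOf_coe]
    have h2 : (2 : ℕ) ∣ n := this ▸ orderOf_dvd_natCard (⟨x, hx.2⟩ : H)
    have := Nat.odd_iff.mp hodd
    omega
  obtain ⟨A, hAsub, hAinv, hAcard⟩ :=
    lemB κn S1 hS1inv (by rw [hS1card]; exact hκle) (Or.inl hκeven)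
  have hA1 : (1 : G) ∉ A := fun h => by
    have := hAsub h
    rw [hS1, Finset.mem_erase] at this
    exact this.1 rfl
  have hAH : ∀ x ∈ A, x ∈ H := by
    intro x hx
    have := hAsub hx
    rw [hS1, Finset.mem_erase, hmemF1] at this
    exact this.2
  -- inverse-closedness of fibers of self-inverse cosets
  have hFinv : ∀ q : G ⧸ H, q⁻¹ = q → ∀ x ∈ F q, x⁻¹ ∈ F q := by
    intro q hq x hx
    rw [hmemF] at hx ⊢
    rw [hπinv, hx, hq]
  -- selection for self-inverse nontrivial cosets
  have hself : ∀ q : G ⧸ H, ∃ T : Finset G, T ⊆ F q ∧ (∀ x ∈ T, x⁻¹ ∈ T) ∧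
      (q⁻¹ = q → T.card = τn) := by
    intro q
    by_cases hs : q⁻¹ = q
    · have hfix : ∃ x ∈ F q, x⁻¹ = x := by
        by_contra h
        push_neg at h
        have := lemC (F q) (hFinv q hs) h
        rw [hcardF q] at this
        exact (Nat.not_even_iff_odd.mpr hodd) this
      obtain ⟨T, h1, h2, h3⟩ :=
        lemB τn (F q) (hFinv q hs) (by rw [hcardF]; exact hτle) (Or.inr hfix)
      exact ⟨T, h1, h2, fun _ => h3⟩
    · exact ⟨∅, Finset.empty_subset _, by simp, fun h => absurd h hs⟩
  choose Bs hBssub hBsinv hBscard using hself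
  -- generic selection
  have hpick : ∀ q : G ⧸ H, ∃ T, T ⊆ F q ∧ T.card = τn := fun q =>
    Finset.exists_subset_card_eq (by rw [hcardF]; exact hτle)
  choose P hPsub hPcard using hpick
  let e := Fintype.equivFin (G ⧸ H)
  set S : G ⧸ H → Finset G := fun q =>
    if q = 1 then A
    else if q⁻¹ = q then Bs q
    else if e q < e q⁻¹ then P q else (P q⁻¹)⁻¹ with hSdef
  -- basic facts about inverse of a Finset
  have hmeminv : ∀ (T : Finset G) (x : G), x ∈ T⁻¹ ↔ x⁻¹ ∈ T := by
    intro T x; exact Finset.mem_inv'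
  -- S q sits inside the fiber of q
  have hSsub : ∀ (q : G ⧸ H), ∀ x ∈ S q, QuotientGroup.mk x = q := by
    intro q x hx
    simp only [hSdef] at hx
    by_cases h1 : q = 1
    · subst h1; rw [if_pos rfl] at hx
      rw [← (QuotientGroup.eq_one_iff x).mpr (hAH x hx)]
    rw [if_neg h1] at hx
    by_cases hs : q⁻¹ = q
    · rw [if_pos hs] at hx
      exact (hmemF q x).mp (hBssub q hx)
    rw [if_neg hs] at hx
    by_cases he : e q < e q⁻¹
    · rw [if_pos he] at hx
      exact (hmemF q x).mp (hPsub q hx)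
    · rw [if_neg he] at hx
      rw [hmeminv] at hx
      have := (hmemF q⁻¹ x⁻¹).mp (hPsub q⁻¹ hx)
      rw [hπinv] at this
      rw [← inv_inv q, ← this, inv_inv]
  -- S 1 = A
  have hS1A : S 1 = A := by simp [hSdef]
  -- cardinalities for q ≠ 1
  have hScard : ∀ q, q ≠ 1 → (S q).card = τn := by
    intro q h1
    simp only [hSdef, if_neg h1]
    by_cases hs : q⁻¹ = q
    · rw [if_pos hs]; exact hBscard q hs
    rw [if_neg hs]
    by_cases he : e q < e q⁻¹
    · rw [if_pos he]; exact hPcard q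
    · rw [if_neg he, Finset.card_inv]; exact hPcard q⁻¹
  -- inverse-closedness across cosets
  have hSinv : ∀ q, ∀ x ∈ S q, x⁻¹ ∈ S q⁻¹ := by
    intro q x hx
    by_cases h1 : q = 1
    · subst h1
      rw [hS1A] at hx
      rw [inv_one, hS1A]
      exact hAinv x hx
    by_cases hs : q⁻¹ = q
    · rw [hs]
      simp only [hSdef, if_neg h1, if_pos hs] at hx ⊢
      exact hBsinv q x hx
    have h1' : q⁻¹ ≠ 1 := fun h => h1 (by rw [← inv_inv q, h, inv_one])
    have hs' : (q⁻¹)⁻¹ ≠ q⁻¹ := by rw [inv_inv]; exact fun h => hs h.symm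
    by_cases he : e q < e q⁻¹
    · have he' : ¬ e q⁻¹ < e (q⁻¹)⁻¹ := by rw [inv_inv]; omega
      simp only [hSdef, if_neg h1, if_neg hs, if_pos he] at hx
      simp only [hSdef, if_neg h1', if_neg hs', if_neg he']
      rw [hmeminv, inv_inv, inv_inv]
      exact hx
    · have he' : e q⁻¹ < e (q⁻¹)⁻¹ := by
        rw [inv_inv]
        have : e q ≠ e q⁻¹ := fun h => hs (e.injective h.symm)
        omega
      simp only [hSdef, if_neg h1, if_neg hs, if_neg he] at hx
      rw [hmeminv] at hx
      simp only [hSdef, if_neg h1', if_neg hs', if_pos he']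
      exact hx
  -- the connection set
  set X : Set G := {g | g ∈ S (QuotientGroup.mk g)} with hX
  have hmemX : ∀ g, g ∈ X ↔ g ∈ S (QuotientGroup.mk g) := fun g => Iff.rfl
  refine ⟨X, ⟨?_, ?_⟩, ?_, ?_⟩
  · -- 1 ∉ X
    intro h
    rw [hmemX] at h
    have : (QuotientGroup.mk 1 : G ⧸ H) = 1 := rfl
    rw [this, hS1A] at h
    exact hA1 h
  · -- X⁻¹ = X
    ext g
    rw [Set.mem_inv, hmemX, hmemX]
    constructor
    · intro h
      have := hSinv _ _ h
      rwa [inv_inv, ← hπinv, inv_inv] at this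
    · intro h
      have := hSinv _ _ h
      rw [hπinv]
      exact this
  · -- vertices in H
    intro r hr
    have hset : {s ∈ (H : Set G) | r⁻¹ * s ∈ X} = (fun x => r * x) '' ↑A := by
      ext s
      simp only [Set.mem_setOf_eq, Set.mem_image, Finset.coe_sort_coe, Finset.mem_coe]
      constructor
      · rintro ⟨hsH, hsX⟩
        refine ⟨r⁻¹ * s, ?_, by group⟩
        rw [hmemX] at hsX
        have hmem : r⁻¹ * s ∈ H := H.mul_mem (H.inv_mem hr) hsH
        have : (QuotientGroup.mk (r⁻¹ * s) : G ⧸ H) = 1 := (QuotientGroup.eq_one_iff _).mpr hmem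
        rwa [this, hS1A] at hsX
      · rintro ⟨x, hxA, rfl⟩
        have hxH := hAH x hxA
        refine ⟨H.mul_mem hr hxH, ?_⟩
        rw [hmemX]
        have h1 : r⁻¹ * (r * x) = x := by group
        rw [h1]
        have : (QuotientGroup.mk x : G ⧸ H) = 1 := (QuotientGroup.eq_one_iff _).mpr hxH
        rwa [this, hS1A]
    rw [hset, Set.ncard_image_of_injective _ (mul_right_injective r),
      Set.ncard_coe_finset, hAcard, hκcast]
  · -- vertices outside H
    intro g hg
    set q := (QuotientGroup.mk g : G ⧸ H)⁻¹ with hq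
    have hq1 : q ≠ 1 := by
      rw [hq]
      intro h
      have : (QuotientGroup.mk g : G ⧸ H) = 1 := by
        rw [← inv_inv (QuotientGroup.mk g : G ⧸ H), h, inv_one]
      exact hg ((QuotientGroup.eq_one_iff g).mp this)
    have hset : {s ∈ (H : Set G) | g⁻¹ * s ∈ X} = (fun x => g * x) '' ↑(S q) := by
      ext s
      simp only [Set.mem_setOf_eq, Set.mem_image, Finset.coe_sort_coe, Finset.mem_coe]
      constructor
      · rintro ⟨hsH, hsX⟩
        refine ⟨g⁻¹ * s, ?_, by group⟩
        rw [hmemX] at hsX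
        have : (QuotientGroup.mk (g⁻¹ * s) : G ⧸ H) = q := by
          rw [hπ, hπinv, (QuotientGroup.eq_one_iff _).mpr hsH, mul_one, hq]
        rwa [this] at hsX
      · rintro ⟨x, hxS, rfl⟩
        have hπx : (QuotientGroup.mk x : G ⧸ H) = q := hSsub q x hxS
        have hgx : g * x ∈ H := by
          rw [← QuotientGroup.eq_one_iff]
          rw [hπ, hπx, hq, mul_inv_cancel]
        refine ⟨hgx, ?_⟩
        rw [hmemX]
        have h1 : g⁻¹ * (g * x) = x := by group
        rw [h1, hπx]
        exact hxS
    rw [hset, Set.ncard_image_of_injective _ (mul_right_injective g),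
      Set.ncard_coe_finset, hScard q hq1, hτcast]
end

section
/- Let G be a finite group and H a non-trivial normal subgroup of G whose index |G/H| is odd. Then H is a (κ,τ)-regular set of G for every pair of integers κ and τ satisfying 0 ≤ κ ≤ |H| − 1, 1 ≤ τ ≤ |H| and gcd(2, |H| − 1) ∣ κ. -/
open Pointwise

private lemma exists_half {α : Type*} [DecidableEq α] (f : α → α) :
    ∀ S : Finset α, (∀ x ∈ S, f x ∈ S) → (∀ x ∈ S, f (f x) = x) →
      (∀ x ∈ S, f x ≠ x) →
      ∃ T ⊆ S, (∀ x ∈ T, f x ∉ T) ∧ ∀ x ∈ S, x ∈ T ∨ f x ∈ T := by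
  intro S
  induction S using Finset.strongInduction with
  | _ S ih =>
    intro hmem hinv hfix
    rcases S.eq_empty_or_nonempty with rfl | ⟨x, hx⟩
    · exact ⟨∅, Finset.Subset.refl _, by simp, by simp⟩
    · have hfxS : f x ∈ S := hmem x hx
      have hne : f x ≠ x := hfix x hx
      have hpair : ({x, f x} : Finset α) ⊆ S := by
        simp [Finset.insert_subset_iff, hx, hfxS]
      have hsub : S \ {x, f x} ⊂ S :=
        Finset.sdiff_ssubset hpair ⟨x, by simp⟩
      have hmem' : ∀ y ∈ S \ {x, f x}, f y ∈ S \ {x, f x} := by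
        intro y hy
        simp only [Finset.mem_sdiff, Finset.mem_insert, Finset.mem_singleton, not_or] at hy ⊢
        obtain ⟨hyS, hy1, hy2⟩ := hy
        refine ⟨hmem y hyS, ?_, ?_⟩
        · intro h; exact hy2 (by rw [← hinv y hyS, h])
        · intro h
          have := hinv y hyS
          rw [h, hinv x hx] at this
          exact hy1 this.symm
      have hinv' : ∀ y ∈ S \ {x, f x}, f (f y) = y := fun y hy =>
        hinv y (Finset.mem_sdiff.mp hy).1
      have hfix' : ∀ y ∈ S \ {x, f x}, f y ≠ y := fun y hy =>
        hfix y (Finset.mem_sdiff.mp hy).1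
      obtain ⟨T, hTS, hT1, hT2⟩ := ih _ hsub hmem' hinv' hfix'
      have hTS' : T ⊆ S := hTS.trans (Finset.sdiff_subset)
      have hxT : x ∉ T := fun h => by
        have := Finset.mem_sdiff.mp (hTS h); simp at this
      have hfxT : f x ∉ T := fun h => by
        have := Finset.mem_sdiff.mp (hTS h); simp at this
      refine ⟨insert x T, Finset.insert_subset hx hTS', ?_, ?_⟩
      · intro y hy hcon
        rcases Finset.mem_insert.mp hy with rfl | hyT
        · rcases Finset.mem_insert.mp hcon with h | h
          · exact hne h
          · exact hfxT h
        · rcases Finset.mem_insert.mp hcon with h | h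
          · -- f y = x, so y = f x ∈ T, contradiction
            have : y = f x := by rw [← hinv y (hTS' hyT), h]
            exact hfxT (this ▸ hyT)
          · exact hT1 y hyT h
      · intro z hz
        by_cases h1 : z = x
        · exact Or.inl (by simp [h1])
        by_cases h2 : z = f x
        · right
          rw [h2, hinv x hx]
          exact Finset.mem_insert_self x T
        · have hz' : z ∈ S \ {x, f x} := by
            simp [Finset.mem_sdiff, hz, h1, h2]
          exact (hT2 z hz').imp Finset.mem_insert_of_mem Finset.mem_insert_of_mem

private lemma exists_closed_subset {α : Type*} [DecidableEq α] (f : α → α) :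
    ∀ (n : ℕ) (S : Finset α), (∀ x ∈ S, f x ∈ S) → (∀ x ∈ S, f (f x) = x) →
      n ≤ S.card → (2 ∣ n ∨ ∃ x ∈ S, f x = x) →
      ∃ A ⊆ S, A.card = n ∧ ∀ x ∈ A, f x ∈ A := by
  intro n
  induction n using Nat.strong_induction_on with
  | _ n ih =>
    intro S hmem hinv hcard hpar
    by_cases hallfix : ∀ x ∈ S, f x = x
    · obtain ⟨A, hAS, hA⟩ := Finset.exists_subset_card_eq hcard
      exact ⟨A, hAS, hA, fun x hx => by rw [hallfix x (hAS hx)]; exact hx⟩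
    · push_neg at hallfix
      obtain ⟨x, hx, hfx⟩ := hallfix
      match n, hcard, hpar with
      | 0, _, _ => exact ⟨∅, by simp, by simp, by simp⟩
      | 1, _, hpar =>
        rcases hpar with h2 | ⟨y, hy, hfy⟩
        · omega
        · exact ⟨{y}, by simp [hy], by simp, by simp [hfy]⟩
      | (m+2), hcard, hpar =>
        have hfxS : f x ∈ S := hmem x hx
        have hxfx : x ≠ f x := Ne.symm hfx
        have hpair : ({x, f x} : Finset α) ⊆ S := by
          simp [Finset.insert_subset_iff, hx, hfxS]
        have hcard2 : ({x, f x} : Finset α).card = 2 := Finset.card_pair hxfx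
        have hcard' : (S \ {x, f x}).card = S.card - 2 := by
          rw [Finset.card_sdiff_of_subset hpair, hcard2]
        have hmem' : ∀ y ∈ S \ {x, f x}, f y ∈ S \ {x, f x} := by
          intro y hy
          simp only [Finset.mem_sdiff, Finset.mem_insert, Finset.mem_singleton,
            not_or] at hy ⊢
          obtain ⟨hyS, hy1, hy2⟩ := hy
          refine ⟨hmem y hyS, ?_, ?_⟩
          · intro h; exact hy2 (by rw [← hinv y hyS, h])
          · intro h
            have := hinv y hyS
            rw [h, hinv x hx] at this
            exact hy1 this.symm
        have hinv' : ∀ y ∈ S \ {x, f x}, f (f y) = y := fun y hy =>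
          hinv y (Finset.mem_sdiff.mp hy).1
        have hmle : m ≤ (S \ {x, f x}).card := by omega
        have hpar' : 2 ∣ m ∨ ∃ y ∈ S \ {x, f x}, f y = y := by
          rcases hpar with h2 | ⟨y, hy, hfy⟩
          · left; omega
          · right
            refine ⟨y, ?_, hfy⟩
            simp only [Finset.mem_sdiff, Finset.mem_insert, Finset.mem_singleton, not_or]
            refine ⟨hy, ?_, ?_⟩
            · rintro rfl; exact hfx hfy
            · rintro rfl
              rw [hinv x hx] at hfy
              exact hfx hfy.symm
        obtain ⟨A', hA'S, hA'card, hA'cl⟩ := ih m (by omega) _ hmem' hinv' hmle hpar'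
        have hxA' : x ∉ A' := fun h => by
          have := Finset.mem_sdiff.mp (hA'S h); simp at this
        have hfxA' : f x ∉ A' := fun h => by
          have := Finset.mem_sdiff.mp (hA'S h); simp at this
        have hxmem : x ∉ insert (f x) A' := by
          simp [hxfx, hxA']
        refine ⟨insert x (insert (f x) A'), ?_, ?_, ?_⟩
        · refine Finset.insert_subset hx (Finset.insert_subset hfxS ?_)
          exact hA'S.trans Finset.sdiff_subset
        · rw [Finset.card_insert_of_notMem hxmem,
            Finset.card_insert_of_notMem hfxA', hA'card]
        · intro y hy
          rcases Finset.mem_insert.mp hy with rfl | hy'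
          · exact Finset.mem_insert_of_mem (Finset.mem_insert_self _ _)
          rcases Finset.mem_insert.mp hy' with rfl | hy''
          · rw [hinv x hx]; exact Finset.mem_insert_self _ _
          · exact Finset.mem_insert_of_mem (Finset.mem_insert_of_mem (hA'cl y hy''))

theorem statement_3 {G : Type*} [Group G] [Fintype G] (H : Subgroup G) [H.Normal]
    (hH : H ≠ ⊥) (hodd : Odd H.index) (κ τ : ℤ)
    (hκ0 : 0 ≤ κ) (hκ1 : κ ≤ (Nat.card H : ℤ) - 1)
    (hτ0 : 1 ≤ τ) (hτ1 : τ ≤ (Nat.card H : ℤ))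
    (hgcd : ((Nat.gcd 2 (Nat.card H - 1) : ℕ) : ℤ) ∣ κ) :
    IsRegularSetOfGroup (H : Set G) κ τ := by
  classical
  haveI : Fintype (G ⧸ H) := Fintype.ofFinite _
  -- the finset of elements of H
  set Hf : Finset G := Finset.univ.filter (fun x => x ∈ H) with hHfdef
  have hHf : ∀ x : G, x ∈ Hf ↔ x ∈ H := by intro x; simp [hHfdef]
  have hHfcard : Hf.card = Nat.card H := by
    have h1 : (Hf : Set G) = (H : Set G) := by ext x; simp [hHf x]
    rw [← Set.ncard_coe_finset, h1, ← Nat.card_coe_set_eq]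
    simp
  have hHpos : 0 < Nat.card H := Nat.card_pos
  -- the finset of non-identity elements of H
  set SH : Finset G := Hf.erase 1 with hSHdef
  have hSH : ∀ x : G, x ∈ SH ↔ x ∈ H ∧ x ≠ 1 := by
    intro x; rw [hSHdef, Finset.mem_erase, hHf x]; tauto
  have hSHcard : SH.card = Nat.card H - 1 := by
    rw [hSHdef, Finset.card_erase_of_mem ((hHf 1).mpr H.one_mem), hHfcard]
  -- parity / involution condition for building A
  have hApar : 2 ∣ κ.toNat ∨ ∃ x ∈ SH, (fun y : G => y⁻¹) x = x := by
    by_cases he : Even (Nat.card H)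
    · right
      haveI : Fintype ↥H := Fintype.ofFinite _
      haveI : Fact (Nat.Prime 2) := ⟨Nat.prime_two⟩
      obtain ⟨g, hg⟩ := exists_prime_orderOf_dvd_card (G := ↥H) 2
        (by rw [← Nat.card_eq_fintype_card]; exact he.two_dvd)
      have hg1 : g ≠ 1 := by
        intro h; rw [h, orderOf_one] at hg; omega
      have hgg : g * g = 1 := by
        have := pow_orderOf_eq_one g
        rwa [hg, pow_two] at this
      have hginv : g⁻¹ = g := inv_eq_of_mul_eq_one_right hgg
      refine ⟨(g : G), (hSH _).mpr ⟨g.2, ?_⟩, ?_⟩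
      · intro h
        exact hg1 (by ext; simp [h])
      · show ((g : G))⁻¹ = (g : G)
        rw [← Subgroup.coe_inv, hginv]
    · left
      have hnd : ¬ 2 ∣ Nat.card H := by
        rwa [← even_iff_two_dvd]
      have h2 : 2 ∣ Nat.card H - 1 := by omega
      rw [Nat.gcd_eq_left h2] at hgcd
      have hκeq : κ = (κ.toNat : ℤ) := (Int.toNat_of_nonneg hκ0).symm
      rw [hκeq] at hgcd
      exact_mod_cast hgcd
  have hcardA : κ.toNat ≤ SH.card := by
    rw [hSHcard, Int.toNat_le]
    rw [Nat.cast_sub hHpos]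
    exact_mod_cast hκ1
  obtain ⟨A, hASH, hAcard, hAinv⟩ := exists_closed_subset (fun y : G => y⁻¹) κ.toNat SH
    (fun x hx => by
      rw [hSH] at hx ⊢
      exact ⟨H.inv_mem hx.1, by simp [hx.2]⟩)
    (fun x _ => inv_inv x) hcardA hApar
  -- the half-set T of nontrivial cosets
  set SQ : Finset (G ⧸ H) := Finset.univ.filter (fun q => q ≠ 1) with hSQdef
  have hSQ : ∀ q : G ⧸ H, q ∈ SQ ↔ q ≠ 1 := by intro q; simp [hSQdef]
  have hindex : Nat.card (G ⧸ H) = H.index := rfl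
  have hfixQ : ∀ q : G ⧸ H, q ∈ SQ → q⁻¹ ≠ q := by
    intro q hq hcon
    have hq1 : q ≠ 1 := (hSQ q).mp hq
    have hq2 : q ^ 2 = 1 := by
      rw [pow_two]; nth_rewrite 1 [← hcon]; exact inv_mul_cancel q
    have hd2 : orderOf q ∣ 2 := orderOf_dvd_of_pow_eq_one hq2
    have hdI : orderOf q ∣ H.index := by rw [← hindex]; exact orderOf_dvd_natCard q
    have hcop : Nat.Coprime 2 H.index :=
      (Nat.Prime.coprime_iff_not_dvd Nat.prime_two).mpr
        (by have := Nat.odd_iff.mp hodd; omega)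
    have : orderOf q ∣ 1 := by
      rw [← hcop]; exact Nat.dvd_gcd hd2 hdI
    exact hq1 (orderOf_eq_one_iff.mp (Nat.dvd_one.mp this))
  obtain ⟨T, hTS, hT1, hT2⟩ := exists_half (fun q : G ⧸ H => q⁻¹) SQ
    (fun q hq => by rw [hSQ] at hq ⊢; simp [hq])
    (fun q _ => inv_inv q) hfixQ
  have hTne1 : ∀ q ∈ T, q ≠ (1 : G ⧸ H) := fun q hq => (hSQ q).mp (hTS hq)
  -- fibers of the quotient map
  set fib : G ⧸ H → Finset G :=
    fun q => Finset.univ.filter (fun x => (QuotientGroup.mk x : G ⧸ H) = q) with hfibdef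
  have hfib : ∀ (x : G) (q : G ⧸ H), x ∈ fib q ↔ (QuotientGroup.mk x : G ⧸ H) = q := by
    intro x q; simp [hfibdef]
  have hfibcard : ∀ q : G ⧸ H, (fib q).card = Nat.card H := by
    intro q
    obtain ⟨g, rfl⟩ := QuotientGroup.mk_surjective q
    have himg : fib (QuotientGroup.mk g) = Hf.image (fun h => g * h) := by
      ext x
      rw [hfib, Finset.mem_image]
      constructor
      · intro h
        have hxg : x⁻¹ * g ∈ H := QuotientGroup.eq.mp h
        refine ⟨g⁻¹ * x, (hHf _).mpr ?_, by group⟩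
        have := H.inv_mem hxg
        simpa using this
      · rintro ⟨a, ha, rfl⟩
        symm
        rw [QuotientGroup.eq]
        have h2 : g⁻¹ * (g * a) = a := by group
        rw [h2]
        exact (hHf a).mp ha
    rw [himg, Finset.card_image_of_injective _ (mul_right_injective g), hHfcard]
  -- choose τ elements in each fiber
  have hτle : ∀ q : G ⧸ H, τ.toNat ≤ (fib q).card := by
    intro q; rw [hfibcard q]; exact Int.toNat_le.mpr hτ1
  have hs : ∀ q : G ⧸ H, ∃ F, F ⊆ fib q ∧ F.card = τ.toNat :=
    fun q => Finset.exists_subset_card_eq (hτle q)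
  choose s hs1 hs2 using hs
  have hs_mk : ∀ (q : G ⧸ H), ∀ x ∈ s q, (QuotientGroup.mk x : G ⧸ H) = q :=
    fun q x hx => (hfib x q).mp (hs1 q hx)
  -- the connection set
  set Xf : Finset G := A ∪ T.biUnion (fun q => s q ∪ (s q).image (fun y => y⁻¹)) with hXfdef
  have hmemX : ∀ x : G, x ∈ Xf ↔ x ∈ A ∨ ∃ q ∈ T, x ∈ s q ∨ x⁻¹ ∈ s q := by
    intro x
    rw [hXfdef]
    simp only [Finset.mem_union, Finset.mem_biUnion, Finset.mem_image]
    constructor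
    · rintro (h | ⟨q, hq, h | ⟨y, hy, rfl⟩⟩)
      · exact Or.inl h
      · exact Or.inr ⟨q, hq, Or.inl h⟩
      · exact Or.inr ⟨q, hq, Or.inr (by simpa using hy)⟩
    · rintro (h | ⟨q, hq, h | h⟩)
      · exact Or.inl h
      · exact Or.inr ⟨q, hq, Or.inl h⟩
      · exact Or.inr ⟨q, hq, Or.inr ⟨x⁻¹, h, inv_inv x⟩⟩
  have hA_mk : ∀ x ∈ A, (QuotientGroup.mk x : G ⧸ H) = 1 :=
    fun x hx => (QuotientGroup.eq_one_iff x).mpr ((hSH x).mp (hASH hx)).1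
  have hmkinv : ∀ x : G, (QuotientGroup.mk x⁻¹ : G ⧸ H) = (QuotientGroup.mk x : G ⧸ H)⁻¹ :=
    fun x => rfl
  -- intersections of Xf with fibers
  have hX1 : Xf ∩ fib 1 = A := by
    ext x
    rw [Finset.mem_inter, hfib]
    constructor
    · rintro ⟨hx, hx1⟩
      rcases (hmemX x).mp hx with h | ⟨q, hq, h | h⟩
      · exact h
      · exact absurd ((hs_mk q x h).symm.trans hx1) (hTne1 q hq)
      · have : q = 1 := by
          rw [← hs_mk q _ h, hmkinv, hx1, inv_one]
        exact absurd this (hTne1 q hq)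
    · intro h
      exact ⟨(hmemX x).mpr (Or.inl h), hA_mk x h⟩
  have hXT : ∀ p ∈ T, Xf ∩ fib p = s p := by
    intro p hp
    ext x
    rw [Finset.mem_inter, hfib]
    constructor
    · rintro ⟨hx, hxp⟩
      rcases (hmemX x).mp hx with h | ⟨q, hq, h | h⟩
      · exact absurd ((hA_mk x h).symm.trans hxp) (Ne.symm (hTne1 p hp))
      · rwa [(hs_mk q x h).symm.trans hxp] at h
      · have hq' : q = p⁻¹ := by
          rw [← hs_mk q _ h, hmkinv, hxp]
        rw [hq'] at hq
        exact absurd hq (hT1 p hp)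
    · intro h
      exact ⟨(hmemX x).mpr (Or.inr ⟨p, hp, Or.inl h⟩), hs_mk p x h⟩
  have hXT' : ∀ p : G ⧸ H, p ≠ 1 → p ∉ T →
      Xf ∩ fib p = (s p⁻¹).image (fun y => y⁻¹) := by
    intro p hp1 hpT
    have hpinvT : p⁻¹ ∈ T := by
      rcases hT2 p ((hSQ p).mpr hp1) with h | h
      · exact absurd h hpT
      · exact h
    ext x
    rw [Finset.mem_inter, hfib, Finset.mem_image]
    constructor
    · rintro ⟨hx, hxp⟩
      rcases (hmemX x).mp hx with h | ⟨q, hq, h | h⟩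
      · exact absurd ((hA_mk x h).symm.trans hxp) (Ne.symm hp1)
      · rw [(hs_mk q x h).symm.trans hxp] at hq
        exact absurd hq hpT
      · have hq' : q = p⁻¹ := by
          rw [← hs_mk q _ h, hmkinv, hxp]
        exact ⟨x⁻¹, hq' ▸ h, inv_inv x⟩
    · rintro ⟨y, hy, rfl⟩
      refine ⟨(hmemX _).mpr (Or.inr ⟨p⁻¹, hpinvT, Or.inr (by simpa using hy)⟩), ?_⟩
      rw [hmkinv, hs_mk _ y hy, inv_inv]
  -- key counting identity
  have key : ∀ g : G,
      {y : G | y ∈ (H : Set G) ∧ g⁻¹ * y ∈ (Xf : Set G)}.ncard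
        = (Xf ∩ fib ((QuotientGroup.mk g : G ⧸ H)⁻¹)).card := by
    intro g
    have himg : {y : G | y ∈ (H : Set G) ∧ g⁻¹ * y ∈ (Xf : Set G)}
        = (fun z => g * z) '' ↑(Xf ∩ fib ((QuotientGroup.mk g : G ⧸ H)⁻¹)) := by
      ext y
      simp only [Set.mem_setOf_eq, Set.mem_image, Finset.coe_inter, Set.mem_inter_iff,
        Finset.mem_coe, SetLike.mem_coe]
      constructor
      · rintro ⟨hyH, hyX⟩
        refine ⟨g⁻¹ * y, ⟨hyX, ?_⟩, by group⟩
        rw [hfib]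
        have h1 : (QuotientGroup.mk y : G ⧸ H) = 1 := (QuotientGroup.eq_one_iff y).mpr hyH
        show (QuotientGroup.mk (g⁻¹ * y) : G ⧸ H) = _
        rw [QuotientGroup.mk_mul, h1, mul_one, hmkinv]
      · rintro ⟨z, ⟨hzX, hzf⟩, rfl⟩
        rw [hfib] at hzf
        constructor
        · rw [← QuotientGroup.eq_one_iff]
          rw [QuotientGroup.mk_mul, hzf, mul_inv_cancel]
        · simpa using hzX
    rw [himg, Set.ncard_image_of_injective _ (mul_right_injective g), Set.ncard_coe_finset]
  -- assemble
  refine ⟨(Xf : Set G), ⟨?_, ?_⟩, ?_, ?_⟩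
  · -- 1 ∉ X
    intro h
    have h1 : (QuotientGroup.mk (1:G) : G ⧸ H) = 1 := (QuotientGroup.eq_one_iff 1).mpr H.one_mem
    rcases (hmemX 1).mp h with h' | ⟨q, hq, h' | h'⟩
    · exact ((hSH 1).mp (hASH h')).2 rfl
    · exact hTne1 q hq ((hs_mk q 1 h').symm.trans h1)
    · rw [inv_one] at h'
      exact hTne1 q hq ((hs_mk q 1 h').symm.trans h1)
  · -- X⁻¹ = X
    have hXinv : ∀ x : G, x ∈ Xf → x⁻¹ ∈ Xf := by
      intro x hx
      rcases (hmemX x).mp hx with h | ⟨q, hq, h | h⟩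
      · exact (hmemX _).mpr (Or.inl (hAinv x h))
      · exact (hmemX _).mpr (Or.inr ⟨q, hq, Or.inr (by simpa using h)⟩)
      · exact (hmemX _).mpr (Or.inr ⟨q, hq, Or.inl h⟩)
    ext x
    simp only [Set.mem_inv, Finset.mem_coe]
    exact ⟨fun h => by simpa using hXinv _ h, fun h => hXinv x h⟩
  · -- κ condition
    intro r hr
    rw [key r]
    have h1 : (QuotientGroup.mk r : G ⧸ H) = 1 := (QuotientGroup.eq_one_iff r).mpr hr
    rw [h1, inv_one, hX1, hAcard, Int.toNat_of_nonneg hκ0]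
  · -- τ condition
    intro g hg
    rw [key g]
    have hp1 : (QuotientGroup.mk g : G ⧸ H)⁻¹ ≠ 1 := by
      rw [ne_eq, inv_eq_one]
      intro h
      exact hg ((QuotientGroup.eq_one_iff g).mp h)
    by_cases hpT : (QuotientGroup.mk g : G ⧸ H)⁻¹ ∈ T
    · rw [hXT _ hpT, hs2, Int.toNat_of_nonneg (by omega)]
    · rw [hXT' _ hp1 hpT, Finset.card_image_of_injective _ inv_injective, hs2,
        Int.toNat_of_nonneg (by omega)]
end

section
/- Let G be a finite group, H a non-trivial normal subgroup of G, and τ an integer with 1 ≤ τ ≤ |H|. If τ is even, then H is a (0,τ)-regular set of G. -/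
open Pointwise

section Aux

variable {G : Type*} [Group G] [DecidableEq G]

lemma exists_inv_pair (T : Finset G) (hT : ∀ x ∈ T, x⁻¹ ∈ T) (hcard : 2 ≤ T.card) :
    ∃ P ⊆ T, (∀ x ∈ P, x⁻¹ ∈ P) ∧ P.card = 2 := by
  have hpos : 0 < T.card := by omega
  obtain ⟨x, hx⟩ := Finset.card_pos.mp hpos
  by_cases hxx : x⁻¹ = x
  · have h1 : 1 < T.card := by omega
    obtain ⟨y, hy, hyx⟩ := Finset.exists_mem_ne h1 x
    by_cases hyy : y⁻¹ = y
    · refine ⟨{x, y}, ?_, ?_, ?_⟩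
      · intro z hz; simp at hz; rcases hz with rfl | rfl <;> assumption
      · intro z hz; simp at hz ⊢
        rcases hz with rfl | rfl
        · left; exact hxx
        · right; exact hyy
      · rw [Finset.card_insert_of_notMem (by simp [Ne.symm hyx]), Finset.card_singleton]
    · refine ⟨{y, y⁻¹}, ?_, ?_, ?_⟩
      · intro z hz; simp at hz; rcases hz with rfl | rfl
        · exact hy
        · exact hT y hy
      · intro z hz; simp at hz ⊢; rcases hz with rfl | rfl
        · right; rfl
        · left; rw [inv_inv]
      · rw [Finset.card_insert_of_notMem (by simpa using Ne.symm hyy), Finset.card_singleton]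
  · refine ⟨{x, x⁻¹}, ?_, ?_, ?_⟩
    · intro z hz; simp at hz; rcases hz with rfl | rfl
      · exact hx
      · exact hT x hx
    · intro z hz; simp at hz ⊢; rcases hz with rfl | rfl
      · right; rfl
      · left; rw [inv_inv]
    · rw [Finset.card_insert_of_notMem (by simpa using Ne.symm hxx), Finset.card_singleton]

lemma exists_inv_closed_subset (m : ℕ) :
    ∀ T : Finset G, (∀ x ∈ T, x⁻¹ ∈ T) → 2 * m ≤ T.card →
      ∃ U ⊆ T, (∀ x ∈ U, x⁻¹ ∈ U) ∧ U.card = 2 * m := by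
  induction m with
  | zero => exact fun T _ _ => ⟨∅, by simp⟩
  | succ m ih =>
    intro T hT hcard
    obtain ⟨P, hPT, hPinv, hP2⟩ := exists_inv_pair T hT (by omega)
    have hside1 : ∀ x ∈ T \ P, x⁻¹ ∈ T \ P := by
      intro x hx
      obtain ⟨hxT, hxP⟩ := Finset.mem_sdiff.mp hx
      exact Finset.mem_sdiff.mpr ⟨hT x hxT, fun h => hxP (by simpa using hPinv _ h)⟩
    have hside2 : 2 * m ≤ (T \ P).card := by
      have := Finset.card_sdiff_of_subset hPT; omega
    obtain ⟨U, hUsub, hUinv, hUcard⟩ := ih (T \ P) hside1 hside2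
    have hdisj : Disjoint U P :=
      Finset.disjoint_left.mpr fun x hx => (Finset.mem_sdiff.mp (hUsub hx)).2
    refine ⟨U ∪ P, ?_, ?_, ?_⟩
    · exact Finset.union_subset (hUsub.trans Finset.sdiff_subset) hPT
    · intro x hx
      rcases Finset.mem_union.mp hx with h | h
      · exact Finset.mem_union_left _ (hUinv x h)
      · exact Finset.mem_union_right _ (hPinv x h)
    · rw [Finset.card_union_of_disjoint hdisj, hUcard, hP2]; ring

end Aux

theorem statement_4 {G : Type*} [Group G] [Fintype G] (H : Subgroup G) [H.Normal]
    (hH : H ≠ ⊥) (τ : ℤ)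
    (hτ0 : 1 ≤ τ) (hτ1 : τ ≤ (Nat.card H : ℤ)) (hτeven : Even τ) :
    IsRegularSetOfGroup (H : Set G) 0 τ := by
  classical
  obtain ⟨k, hk⟩ := hτeven
  set t : ℕ := τ.toNat with ht
  have htτ : (t : ℤ) = τ := Int.toNat_of_nonneg (by omega)
  obtain ⟨m, hm⟩ : ∃ m : ℕ, t = 2 * m := ⟨k.toNat, by omega⟩
  have htH : t ≤ Nat.card H := by omega
  set Q := G ⧸ H with hQ
  haveI : Fintype Q := Fintype.ofFinite Q
  set e : Q → ℕ := fun q => ((Fintype.equivFin Q) q : ℕ) with he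
  have heinj : Function.Injective e := fun a b h =>
    (Fintype.equivFin Q).injective (Fin.val_injective h)
  set fiber : Q → Finset G :=
    fun q => Finset.univ.filter (fun x => (QuotientGroup.mk x : Q) = q) with hfib
  have mem_fiber : ∀ (q : Q) (x : G), x ∈ fiber q ↔ (QuotientGroup.mk x : Q) = q := by
    intro q x; simp [hfib]
  -- fiber cardinality
  have fibcard : ∀ q : Q, Nat.card H ≤ (fiber q).card := by
    intro q
    obtain ⟨g, rfl⟩ := QuotientGroup.mk_surjective q
    have : Nat.card H = ((Finset.univ.filter (fun x => x ∈ H)).card) := by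
      rw [Nat.card_eq_fintype_card, Fintype.card_subtype]
    rw [this]
    apply Finset.card_le_card_of_injOn (fun h => g * h)
    · intro x hx
      rw [Finset.mem_coe, mem_fiber]
      have hxH : x ∈ H := by simpa using hx
      have : (QuotientGroup.mk x : Q) = 1 := (QuotientGroup.eq_one_iff x).mpr hxH
      show (QuotientGroup.mk (g * x) : Q) = QuotientGroup.mk g
      rw [QuotientGroup.mk_mul, this, mul_one]
    · intro a _ b _ hab; exact mul_left_cancel hab
  -- fibers are inverse-closed when q is self-inverse
  have fibinv : ∀ q : Q, q⁻¹ = q → ∀ x ∈ fiber q, x⁻¹ ∈ fiber q := by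
    intro q hq x hx
    rw [mem_fiber] at hx ⊢
    rw [QuotientGroup.mk_inv, hx]
    exact hq
  -- choose the per-coset pieces
  have key : ∀ q : Q, ∃ U : Finset G, U ⊆ fiber q ∧ U.card = t ∧
      (q⁻¹ = q → ∀ x ∈ U, x⁻¹ ∈ U) := by
    intro q
    by_cases hq : q⁻¹ = q
    · have h2m : 2 * m ≤ (fiber q).card := by
        have := fibcard q; omega
      obtain ⟨U, hU1, hU2, hU3⟩ := exists_inv_closed_subset m (fiber q) (fibinv q hq) h2m
      exact ⟨U, hU1, by rw [hU3, hm], fun _ => hU2⟩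
    · obtain ⟨U, hU1, hU2⟩ := Finset.exists_subset_card_eq
        (le_trans htH (fibcard q))
      exact ⟨U, hU1, hU2, fun h => absurd h hq⟩
  choose U hUsub hUcard hUinv using key
  set S : Q → Finset G := fun q =>
    if q = 1 then ∅
    else if q⁻¹ = q then U q
    else if e q < e q⁻¹ then U q
    else (U q⁻¹).image (fun x => x⁻¹) with hS
  -- S q sits in fiber q
  have hSsub : ∀ q : Q, S q ⊆ fiber q := by
    intro q
    simp only [hS]
    split_ifs with h1 h2 h3
    · simp
    · exact hUsub q
    · exact hUsub q
    · intro x hx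
      simp only [Finset.mem_image] at hx
      obtain ⟨y, hy, rfl⟩ := hx
      have hyf := hUsub q⁻¹ hy
      rw [mem_fiber] at hyf ⊢
      rw [QuotientGroup.mk_inv, hyf, inv_inv]
  have hScard : ∀ q : Q, q ≠ 1 → (S q).card = t := by
    intro q hq
    simp only [hS]
    rw [if_neg hq]
    split_ifs with h2 h3
    · exact hUcard q
    · exact hUcard q
    · rw [Finset.card_image_of_injective _ inv_injective]; exact hUcard q⁻¹
  have hSinv : ∀ (q : Q) (x : G), x ∈ S q → x⁻¹ ∈ S q⁻¹ := by
    intro q x hx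
    by_cases h1 : q = 1
    · subst h1; simp only [hS] at hx; simp at hx
    have h1' : q⁻¹ ≠ 1 := fun h => h1 (by rwa [inv_eq_one] at h)
    by_cases h2 : q⁻¹ = q
    · simp only [hS] at hx ⊢
      rw [if_neg h1, if_pos h2] at hx
      rw [h2, if_neg h1, if_pos h2]
      exact hUinv q h2 x hx
    have h2' : (q⁻¹)⁻¹ ≠ q⁻¹ := by rw [inv_inv]; exact fun h => h2 h.symm
    by_cases h3 : e q < e q⁻¹
    · simp only [hS] at hx ⊢
      rw [if_neg h1, if_neg h2, if_pos h3] at hx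
      have h3' : ¬ e q⁻¹ < e (q⁻¹)⁻¹ := by rw [inv_inv]; omega
      rw [if_neg h1', if_neg h2', if_neg h3']
      rw [inv_inv]
      exact Finset.mem_image.mpr ⟨x, hx, rfl⟩
    · simp only [hS] at hx ⊢
      rw [if_neg h1, if_neg h2, if_neg h3] at hx
      have hne : e q ≠ e q⁻¹ := fun h => h2 (heinj h).symm
      have h3' : e q⁻¹ < e (q⁻¹)⁻¹ := by rw [inv_inv]; omega
      rw [if_neg h1', if_neg h2', if_pos h3']
      simp only [Finset.mem_image] at hx
      obtain ⟨y, hy, rfl⟩ := hx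
      rwa [inv_inv]
  -- the connection set
  set X : Set G := {x : G | x ∈ S (QuotientGroup.mk x : Q)} with hX
  have memX : ∀ x : G, x ∈ X ↔ x ∈ S (QuotientGroup.mk x : Q) := fun x => Iff.rfl
  have hS1 : S (1 : Q) = ∅ := by simp only [hS]; simp
  refine ⟨X, ⟨?_, ?_⟩, ?_, ?_⟩
  · -- 1 ∉ X
    intro h
    rw [memX] at h
    rw [show (QuotientGroup.mk (1:G) : Q) = 1 from QuotientGroup.mk_one H, hS1] at h
    simp at h
  · -- X⁻¹ = X
    ext x
    rw [Set.mem_inv, memX, memX]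
    constructor
    · intro h
      have := hSinv (QuotientGroup.mk x⁻¹ : Q) x⁻¹ h
      rwa [inv_inv, QuotientGroup.mk_inv, inv_inv] at this
    · intro h
      have := hSinv (QuotientGroup.mk x : Q) x h
      rwa [← QuotientGroup.mk_inv] at this
  · -- κ = 0 part
    intro r hr
    have hempty : {s ∈ (H : Set G) | r⁻¹ * s ∈ X} = ∅ := by
      ext s
      simp only [Set.mem_setOf_eq, Set.mem_empty_iff_false, iff_false, not_and]
      intro hs hsx
      rw [memX] at hsx
      have : (QuotientGroup.mk (r⁻¹ * s) : Q) = 1 :=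
        (QuotientGroup.eq_one_iff _).mpr (mul_mem (inv_mem hr) hs)
      rw [this, hS1] at hsx
      simp at hsx
    rw [hempty]
    simp
  · -- τ part
    intro g hg
    set q : Q := (QuotientGroup.mk g : Q)⁻¹ with hq
    have hq1 : q ≠ 1 := by
      intro h
      rw [hq, inv_eq_one, QuotientGroup.eq_one_iff] at h
      exact hg h
    have himg : (fun s : G => g⁻¹ * s) '' {s ∈ (H : Set G) | g⁻¹ * s ∈ X} = ↑(S q) := by
      ext x
      simp only [Set.mem_image, Set.mem_setOf_eq, Finset.coe_sort_coe, Finset.mem_coe]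
      constructor
      · rintro ⟨s, ⟨hs, hsx⟩, rfl⟩
        rw [memX] at hsx
        have hms : (QuotientGroup.mk s : Q) = 1 := (QuotientGroup.eq_one_iff _).mpr hs
        have : (QuotientGroup.mk (g⁻¹ * s) : Q) = q := by
          rw [QuotientGroup.mk_mul, QuotientGroup.mk_inv, hms, mul_one, hq]
        rwa [this] at hsx
      · intro hx
        have hmx : (QuotientGroup.mk x : Q) = q := (mem_fiber q x).mp (hSsub q hx)
        refine ⟨g * x, ⟨?_, ?_⟩, by group⟩
        · rw [SetLike.mem_coe, ← QuotientGroup.eq_one_iff (g * x)]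
          rw [QuotientGroup.mk_mul, hmx, hq, mul_inv_cancel]
        · rw [memX]
          have : g⁻¹ * (g * x) = x := by group
          rw [this, hmx]
          exact hx
    have hinj : Function.Injective (fun s : G => g⁻¹ * s) :=
      fun a b hab => mul_left_cancel hab
    have := Set.ncard_image_of_injective {s ∈ (H : Set G) | g⁻¹ * s ∈ X} hinj
    rw [himg] at this
    rw [← this, Set.ncard_coe_finset, hScard q hq1, htτ]
end

section
/- Let G be a finite group, H a non-trivial normal subgroup of G, and τ an even integer with 1 ≤ τ ≤ |H|. Then there exists an inverse-closed subset X of G such that X ∩ H = ∅ and |X ∩ gH| = τ for every g ∈ G \ H. -/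
open Pointwise

lemma symSubset {G : Type*} [Group G] (n : ℕ) :
    ∀ A : Set G, A.Finite → A⁻¹ = A → 2 * n ≤ A.ncard →
    ∃ B : Set G, B ⊆ A ∧ B⁻¹ = B ∧ B.ncard = 2 * n := by
  have hmem : ∀ (S : Set G), S⁻¹ = S → ∀ z : G, z⁻¹ ∈ S ↔ z ∈ S := by
    intro S hS z
    conv_lhs => rw [← hS]
    simp [Set.mem_inv]
  induction n with
  | zero => exact fun A _ _ _ => ⟨∅, Set.empty_subset _, Set.inv_empty, by simp⟩
  | succ n ih =>
    intro A hfin hinv hcard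
    by_cases h : ∃ a ∈ A, a⁻¹ ≠ a
    · obtain ⟨a, ha, hne⟩ := h
      have hainv : a⁻¹ ∈ A := (hmem A hinv a).mpr ha
      set P : Set G := {a, a⁻¹} with hP
      have hPA : P ⊆ A := by
        intro x hx; rcases hx with rfl | hx
        · exact ha
        · simp_all
      have hP2 : P.ncard = 2 := Set.ncard_pair (Ne.symm hne)
      have hPinv : P⁻¹ = P := by
        ext z
        simp only [hP, Set.mem_inv, Set.mem_insert_iff, Set.mem_singleton_iff,
          inv_eq_iff_eq_inv]
        constructor
        · rintro (rfl | h2)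
          · exact Or.inr rfl
          · left; rw [h2, inv_inv]
        · rintro (rfl | h2)
          · right; rw [inv_inv]
          · left; rw [h2]
      have hA'inv : (A \ P)⁻¹ = A \ P := by
        ext z
        simp only [Set.mem_inv, Set.mem_diff]
        rw [hmem A hinv, hmem P hPinv]
      have hcardP : (A \ P).ncard = A.ncard - 2 := by
        rw [Set.ncard_diff hPA (hfin.subset hPA), hP2]
      obtain ⟨B', hB'A, hB'inv, hB'card⟩ := ih (A \ P) hfin.diff hA'inv (by
        have h2 : 2 ≤ A.ncard := le_trans (by omega) hcard
        omega)
      have hdisj : Disjoint B' P :=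
        Set.disjoint_of_subset_left hB'A Set.disjoint_sdiff_left
      refine ⟨B' ∪ P, Set.union_subset (hB'A.trans Set.diff_subset) hPA, ?_, ?_⟩
      · rw [Set.union_inv, hB'inv, hPinv]
      · rw [Set.ncard_union_eq hdisj (hfin.subset (hB'A.trans Set.diff_subset))
          (hfin.subset hPA), hB'card, hP2]
        ring
    · push_neg at h
      obtain ⟨B, hBA, hBcard⟩ := Set.exists_subset_card_eq hcard
      refine ⟨B, hBA, ?_, hBcard⟩
      ext x
      simp only [Set.mem_inv]
      constructor
      · intro hx
        have := h x⁻¹ (hBA hx)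
        rw [inv_inv] at this
        rwa [this]
      · intro hx
        rwa [h x (hBA hx)]

theorem statement_5 {G : Type*} [Group G] [Fintype G] (H : Subgroup G) [H.Normal]
    (hH : H ≠ ⊥) (τ : ℤ)
    (hτ0 : 1 ≤ τ) (hτ1 : τ ≤ (Nat.card H : ℤ)) (hτeven : Even τ) :
    ∃ X : Set G, X⁻¹ = X ∧ X ∩ (H : Set G) = ∅ ∧
      ∀ g : G, g ∉ (H : Set G) → ((X ∩ (g • (H : Set G))).ncard : ℤ) = τ := by
  classical
  -- τ = 2 * n as a natural number
  obtain ⟨k, hk⟩ := hτeven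
  set n : ℕ := k.toNat with hn
  have hτn : (2 * n : ℤ) = τ := by omega
  have hnH : 2 * n ≤ Nat.card H := by omega
  -- the quotient and cosets
  set Q := G ⧸ H with hQ
  set C : Q → Set G := fun q => {x : G | (QuotientGroup.mk x : Q) = q} with hC
  have hCcoset : ∀ g : G, g • (H : Set G) = C (QuotientGroup.mk g) := by
    intro g
    ext x
    simp only [hC, Set.mem_setOf_eq]
    rw [mem_leftCoset_iff, eq_comm, QuotientGroup.eq]
    exact Iff.rfl
  have hCcard : ∀ q : Q, (C q).ncard = Nat.card H := by
    intro q
    obtain ⟨g, rfl⟩ := QuotientGroup.mk_surjective q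
    rw [← hCcoset, Set.ncard_smul_set]
    rw [← Nat.card_coe_set_eq, SetLike.coe_sort_coe]
  have hCinv : ∀ q : Q, (C q)⁻¹ = C q⁻¹ := by
    intro q
    ext x
    simp only [hC, Set.mem_inv, Set.mem_setOf_eq]
    rw [QuotientGroup.mk_inv]
    exact inv_eq_iff_eq_inv
  -- choose, for every coset, a subset of size 2n, inverse-closed when the coset is
  have hex : ∀ q : Q, ∃ B : Set G, B ⊆ C q ∧ (q⁻¹ = q → B⁻¹ = B) ∧ B.ncard = 2 * n := by
    intro q
    by_cases hq : q⁻¹ = q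
    · obtain ⟨B, h1, h2, h3⟩ := symSubset n (C q) (Set.toFinite _)
        (by rw [hCinv, hq]) (by rw [hCcard]; exact hnH)
      exact ⟨B, h1, fun _ => h2, h3⟩
    · obtain ⟨B, h1, h2⟩ := Set.exists_subset_card_eq (s := C q) (n := 2 * n)
        (by rw [hCcard]; exact hnH)
      exact ⟨B, h1, fun h => absurd h hq, h2⟩
  choose S hS1 hS2 hS3 using hex
  -- an injection into ℕ to break ties between paired cosets
  obtain ⟨f, hf⟩ := Countable.exists_injective_nat Q
  set F : Q → Set G := fun q =>
    if q = 1 then ∅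
    else if q⁻¹ = q then S q
    else if f q < f q⁻¹ then S q
    else (S q⁻¹)⁻¹ with hF
  have hFsub : ∀ q : Q, F q ⊆ C q := by
    intro q
    simp only [hF]
    split_ifs with h1 h2 h3
    · exact Set.empty_subset _
    · exact hS1 q
    · exact hS1 q
    · intro x hx
      rw [Set.mem_inv] at hx
      have := hS1 q⁻¹ hx
      rw [← hCinv, Set.mem_inv, inv_inv] at this
      exact this
  have hFcard : ∀ q : Q, q ≠ 1 → (F q).ncard = 2 * n := by
    intro q hq
    simp only [hF, if_neg hq]
    split_ifs with h2 h3
    · exact hS3 q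
    · exact hS3 q
    · rw [Set.ncard_inv]; exact hS3 q⁻¹
  have hFinv : ∀ q : Q, (F q)⁻¹ = F q⁻¹ := by
    intro q
    by_cases hq1 : q = 1
    · simp [hF, hq1, Set.inv_empty]
    have hq1' : q⁻¹ ≠ 1 := fun h => hq1 (by rwa [inv_eq_one] at h)
    by_cases hq2 : q⁻¹ = q
    · rw [hq2]
      simp only [hF, if_neg hq1, if_pos hq2]
      exact hS2 q hq2
    · have hq2' : (q⁻¹)⁻¹ ≠ q⁻¹ := by rw [inv_inv]; exact fun h => hq2 h.symm
      have hfne : f q ≠ f q⁻¹ := fun h => hq2 (hf h).symm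
      by_cases h3 : f q < f q⁻¹
      · have h3' : ¬ f q⁻¹ < f (q⁻¹)⁻¹ := by rw [inv_inv]; omega
        have e1 : F q = S q := by
          simp only [hF]; rw [if_neg hq1, if_neg hq2, if_pos h3]
        have e2 : F q⁻¹ = (S (q⁻¹)⁻¹)⁻¹ := by
          simp only [hF]; rw [if_neg hq1', if_neg hq2', if_neg h3']
        rw [e1, e2, inv_inv]
      · have h3' : f q⁻¹ < f (q⁻¹)⁻¹ := by rw [inv_inv]; omega
        have e1 : F q = (S q⁻¹)⁻¹ := by
          simp only [hF]; rw [if_neg hq1, if_neg hq2, if_neg h3]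
        have e2 : F q⁻¹ = S q⁻¹ := by
          simp only [hF]; rw [if_neg hq1', if_neg hq2', if_pos h3']
        rw [e1, e2, inv_inv]
  -- the connection set
  refine ⟨{x : G | x ∈ F (QuotientGroup.mk x)}, ?_, ?_, ?_⟩
  · ext x
    simp only [Set.mem_inv, Set.mem_setOf_eq]
    rw [QuotientGroup.mk_inv, ← hFinv, Set.mem_inv, inv_inv]
  · ext x
    simp only [Set.mem_inter_iff, Set.mem_setOf_eq, Set.mem_empty_iff_false, iff_false,
      not_and, SetLike.mem_coe]
    intro hx hxH
    rw [show (QuotientGroup.mk x : Q) = 1 from (QuotientGroup.eq_one_iff x).mpr hxH] at hx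
    simp [hF] at hx
  · intro g hg
    have hXg : {x : G | x ∈ F (QuotientGroup.mk x)} ∩ (g • (H : Set G))
        = F (QuotientGroup.mk g) := by
      rw [hCcoset]
      ext x
      simp only [Set.mem_inter_iff, Set.mem_setOf_eq, hC]
      constructor
      · rintro ⟨h1, h2⟩; rwa [h2] at h1
      · intro h1
        have h2 : (QuotientGroup.mk x : Q) = QuotientGroup.mk g := hFsub _ h1
        exact ⟨by rwa [h2], h2⟩
    rw [hXg, hFcard _ (fun h => hg ((QuotientGroup.eq_one_iff g).mp h)), ← hτn]
    push_cast
    ring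
end

section
/- Let G be a finite group, H a non-trivial normal subgroup of G, and τ an integer with 1 ≤ τ ≤ |H|. If τ is odd, then H is a (0,τ)-regular set of G if and only if H is a perfect code of G. -/
open Pointwise

section AuxInvol
variable {α : Type*} [DecidableEq α]

lemma invol_even_card (ι : α → α) :
    ∀ n (s : Finset α), s.card = n → (∀ x ∈ s, ι x ∈ s) → (∀ x ∈ s, ι (ι x) = x) →
    (∀ x ∈ s, ι x ≠ x) → Even s.card := by
  intro n
  induction n using Nat.strong_induction_on with
  | _ n ih =>
    intro s hcard hmap hinv hnf
    rcases s.eq_empty_or_nonempty with rfl | ⟨a, ha⟩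
    · simp
    · have hιa := hmap a ha
      have hne := hnf a ha
      set t := s \ {a, ι a} with ht
      have hat : t.card = s.card - 2 := by
        rw [ht, Finset.card_sdiff_of_subset (by simp [Finset.insert_subset_iff, ha, hιa])]
        simp [Finset.card_insert_of_notMem, hne.symm]
      have hts : t ⊆ s := Finset.sdiff_subset
      have h2 : 2 ≤ s.card := by
        have : ({a, ι a} : Finset α) ⊆ s := by simp [Finset.insert_subset_iff, ha, hιa]
        calc 2 = ({a, ι a} : Finset α).card := by simp [hne.symm]
        _ ≤ s.card := Finset.card_le_card this
      have hmain : Even t.card := by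
        refine ih t.card (by omega) t rfl ?_ ?_ ?_
        · intro x hx
          have hxs := hts hx
          have : ι x ∈ s := hmap x hxs
          simp only [ht, Finset.mem_sdiff, Finset.mem_insert, Finset.mem_singleton] at hx ⊢
          refine ⟨this, ?_⟩
          push_neg at hx ⊢
          constructor
          · intro h; apply hx.2.2; rw [← hinv x hxs, h]
          · intro h; apply hx.2.1; rw [← hinv x hxs, h, hinv a ha]
        · intro x hx; exact hinv x (hts hx)
        · intro x hx; exact hnf x (hts hx)
      have : s.card = t.card + 2 := by omega
      rw [this]; exact hmain.add even_two

lemma invol_exists_fixed (ι : α → α) (s : Finset α) (hmap : ∀ x ∈ s, ι x ∈ s)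
    (hinv : ∀ x ∈ s, ι (ι x) = x) (hodd : Odd s.card) : ∃ x ∈ s, ι x = x := by
  by_contra h
  push_neg at h
  have : Even s.card := invol_even_card ι s.card s rfl hmap hinv h
  exact (Nat.not_even_iff_odd.mpr hodd) this

lemma exists_invariant_subset (ι : α → α) (hι : Function.Involutive ι) (s : Finset α)
    (hmap : ∀ x ∈ s, ι x ∈ s) (x₀ : α) (hx₀ : x₀ ∈ s) (hfix : ι x₀ = x₀) :
    ∀ m, 2 * m + 1 ≤ s.card → ∃ t ⊆ s, t.card = 2 * m + 1 ∧ ∀ x ∈ t, ι x ∈ t := by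
  intro m
  induction m with
  | zero =>
    intro _
    exact ⟨{x₀}, by simpa using hx₀, by simp, by simp +contextual [hfix]⟩
  | succ m ih =>
    intro hle
    obtain ⟨t, hts, hcard, htinv⟩ := ih (by omega)
    have hst : (s \ t).card = s.card - t.card := Finset.card_sdiff_of_subset hts
    have h2 : 2 ≤ (s \ t).card := by omega
    by_cases hcase : ∃ y ∈ s \ t, ι y ≠ y
    · obtain ⟨y, hy, hyne⟩ := hcase
      rw [Finset.mem_sdiff] at hy
      have hιys : ι y ∈ s := hmap y hy.1
      have hιyt : ι y ∉ t := fun h => hy.2 (by rw [← hι y]; exact htinv _ h)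
      have hιyy : ι y ≠ y := hyne
      refine ⟨insert y (insert (ι y) t), ?_, ?_, ?_⟩
      · intro x hx
        simp only [Finset.mem_insert] at hx
        rcases hx with rfl | rfl | hx
        · exact hy.1
        · exact hιys
        · exact hts hx
      · rw [Finset.card_insert_of_notMem (by simp [hy.2, hιyy.symm]),
          Finset.card_insert_of_notMem hιyt, hcard]; ring
      · intro x hx
        simp only [Finset.mem_insert] at hx ⊢
        rcases hx with rfl | rfl | hx
        · tauto
        · rw [hι y]; tauto
        · exact Or.inr (Or.inr (htinv _ hx))
    · push_neg at hcase
      obtain ⟨y, hy, z, hz, hyz⟩ := Finset.one_lt_card.mp (by omega : 1 < (s \ t).card)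
      refine ⟨insert y (insert z t), ?_, ?_, ?_⟩
      · intro x hx
        simp only [Finset.mem_insert] at hx
        rcases hx with rfl | rfl | hx
        · exact (Finset.mem_sdiff.mp hy).1
        · exact (Finset.mem_sdiff.mp hz).1
        · exact hts hx
      · rw [Finset.card_insert_of_notMem (by simp [hyz, (Finset.mem_sdiff.mp hy).2]),
          Finset.card_insert_of_notMem (Finset.mem_sdiff.mp hz).2, hcard]; ring
      · intro x hx
        simp only [Finset.mem_insert] at hx ⊢
        rcases hx with rfl | rfl | hx
        · rw [hcase x hy]; tauto
        · rw [hcase x hz]; tauto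
        · exact Or.inr (Or.inr (htinv _ hx))

end AuxInvol

lemma lemA {G : Type*} [Group G] [Fintype G] (H : Subgroup G) [H.Normal] (τ : ℤ)
    (hτodd : Odd τ) (h : IsRegularSetOfGroup (H : Set G) 0 τ) :
    ∀ q : G ⧸ H, q ≠ 1 → q⁻¹ = q → ∃ x : G, (x : G ⧸ H) = q ∧ x⁻¹ = x := by
  classical
  obtain ⟨X, ⟨-, hXinv⟩, -, hreg⟩ := h
  intro q hq1 hqinv
  have hq2 : q * q = 1 := by nth_rewrite 1 [← hqinv]; exact inv_mul_cancel q
  set g : G := q.out with hg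
  have hgq : (g : G ⧸ H) = q := Quotient.out_eq q
  have hgH : g ∉ (H : Set G) := by
    intro hmem
    exact hq1 (by rw [← hgq, QuotientGroup.eq_one_iff]; exact hmem)
  have hcount := hreg g hgH
  set T : Set G := {s ∈ (H : Set G) | g⁻¹ * s ∈ X} with hT
  have hTfin : T.Finite := Set.toFinite T
  have hcard : Odd hTfin.toFinset.card := by
    have h1 : (hTfin.toFinset.card : ℤ) = τ := by
      rw [Set.ncard_eq_toFinset_card T hTfin] at hcount; exact hcount
    rw [← h1] at hτodd
    exact Int.odd_coe_nat _ |>.mp hτodd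
  set σ : G → G := fun s => g * (g⁻¹ * s)⁻¹ with hσ
  have hmapT : ∀ s ∈ T, σ s ∈ T := by
    intro s hs
    obtain ⟨hsH, hsX⟩ := hs
    have hs1 : ((s : G) : G ⧸ H) = 1 := (QuotientGroup.eq_one_iff s).mpr hsH
    constructor
    · have : ((g * (g⁻¹ * s)⁻¹ : G) : G ⧸ H) = 1 := by
        simp only [QuotientGroup.mk_mul, QuotientGroup.mk_inv, hs1, hgq, mul_one, inv_inv]
        exact hq2
      exact (QuotientGroup.eq_one_iff _).mp this
    · show g⁻¹ * (g * (g⁻¹ * s)⁻¹) ∈ X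
      rw [inv_mul_cancel_left, ← hXinv]
      simpa using hsX
  have hinvT : ∀ s ∈ T, σ (σ s) = s := by
    intro s _
    simp only [hσ]
    group
  obtain ⟨s, hsT, hfix⟩ := invol_exists_fixed σ hTfin.toFinset
    (by intro x hx; rw [Set.Finite.mem_toFinset] at *; exact hmapT x hx)
    (by intro x hx; rw [Set.Finite.mem_toFinset] at hx; exact hinvT x hx) hcard
  rw [Set.Finite.mem_toFinset] at hsT
  refine ⟨g⁻¹ * s, ?_, ?_⟩
  · rw [QuotientGroup.mk_mul, QuotientGroup.mk_inv, hgq,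
      (QuotientGroup.eq_one_iff s).mpr hsT.1, mul_one, hqinv]
  · have hfix' : g * (g⁻¹ * s)⁻¹ = s := hfix
    calc (g⁻¹ * s)⁻¹ = g⁻¹ * (g * (g⁻¹ * s)⁻¹) := by group
    _ = g⁻¹ * s := by rw [hfix']


lemma lemE {G : Type*} [Group G] [Fintype G] (H : Subgroup G) [H.Normal] (τ' : ℕ)
    (hτ'1 : τ' ≤ Nat.card H) (hτ'odd : Odd τ')
    (hP : ∀ q : G ⧸ H, q ≠ 1 → q⁻¹ = q → ∃ x : G, (x : G ⧸ H) = q ∧ x⁻¹ = x)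
    (q : G ⧸ H) (hq : q ≠ 1) :
    ∃ t : Finset G, (∀ x ∈ t, (x : G ⧸ H) = q) ∧ t.card = τ' ∧
      (q⁻¹ = q → ∀ x ∈ t, x⁻¹ ∈ t) := by
  classical
  set c : Finset G := Finset.univ.filter (fun x => (x : G ⧸ H) = q) with hc
  have hccard : c.card = Nat.card H := by
    have himg : c = Finset.image (fun h : G => q.out * h)
        (Finset.univ.filter (fun x => x ∈ H)) := by
      ext x
      simp only [hc, Finset.mem_filter, Finset.mem_image, Finset.mem_univ, true_and]
      constructor
      · intro hx
        refine ⟨q.out⁻¹ * x, ?_, by group⟩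
        rw [← QuotientGroup.eq_one_iff, QuotientGroup.mk_mul, QuotientGroup.mk_inv,
          QuotientGroup.out_eq', hx, inv_mul_cancel]
      · rintro ⟨h, hh, rfl⟩
        rw [QuotientGroup.mk_mul, QuotientGroup.out_eq', (QuotientGroup.eq_one_iff h).mpr hh, mul_one]
    rw [himg, Finset.card_image_of_injective _ (mul_right_injective _)]
    rw [Nat.card_eq_fintype_card, Fintype.card_subtype]
  by_cases hself : q⁻¹ = q
  · obtain ⟨x₀, hx₀q, hx₀⟩ := hP q hq hself
    have hx₀c : x₀ ∈ c := by simp [hc, hx₀q]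
    have hmapc : ∀ x ∈ c, x⁻¹ ∈ c := by
      intro x hx
      simp only [hc, Finset.mem_filter, Finset.mem_univ, true_and] at hx ⊢
      rw [QuotientGroup.mk_inv, hx, hself]
    obtain ⟨m, hm⟩ := hτ'odd
    obtain ⟨t, hts, hcard, hinv⟩ := exists_invariant_subset Inv.inv inv_involutive c hmapc
      x₀ hx₀c hx₀ m (by omega)
    refine ⟨t, ?_, by omega, fun _ x hx => hinv x hx⟩
    intro x hx
    have := hts hx
    simp only [hc, Finset.mem_filter, Finset.mem_univ, true_and] at this
    exact this
  · obtain ⟨t, hts, hcard⟩ := Finset.exists_subset_card_eq (show τ' ≤ c.card by omega)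
    refine ⟨t, ?_, hcard, fun h => absurd h hself⟩
    intro x hx
    have := hts hx
    simp only [hc, Finset.mem_filter, Finset.mem_univ, true_and] at this
    exact this


lemma lemD {G : Type*} [Group G] [Fintype G] (H : Subgroup G) [H.Normal] (τ : ℤ)
    (hτ0 : 1 ≤ τ) (hτ1 : τ ≤ (Nat.card H : ℤ)) (hτodd : Odd τ)
    (hP : ∀ q : G ⧸ H, q ≠ 1 → q⁻¹ = q → ∃ x : G, (x : G ⧸ H) = q ∧ x⁻¹ = x) :
    IsRegularSetOfGroup (H : Set G) 0 τ := by
  classical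
  set τ' : ℕ := τ.toNat with hτ'
  have hττ' : (τ' : ℤ) = τ := Int.toNat_of_nonneg (by omega)
  have hτ'odd : Odd τ' := by
    rw [← hττ'] at hτodd
    exact (Int.odd_coe_nat _).mp hτodd
  have hτ'1 : τ' ≤ Nat.card H := by omega
  choose prim hprim1 hprim2 hprim3 using lemE H τ' hτ'1 hτ'odd hP
  haveI : Fintype (G ⧸ H) := Fintype.ofFinite _
  set e := Fintype.equivFin (G ⧸ H) with he
  set S : (G ⧸ H) → Finset G := fun q =>
    if hq : q = 1 then ∅
    else if q⁻¹ = q ∨ (e q : ℕ) < e q⁻¹ then prim q hq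
    else (prim q⁻¹ (inv_ne_one.mpr hq))⁻¹ with hS
  have hS1 : S 1 = ∅ := by simp [hS]
  have hScoset : ∀ q : G ⧸ H, ∀ x ∈ S q, (x : G ⧸ H) = q := by
    intro q x hx
    by_cases hq : q = 1
    · subst hq; rw [hS1] at hx; exact absurd hx (Finset.notMem_empty x)
    · rw [hS] at hx
      simp only [dif_neg hq] at hx
      by_cases h2 : q⁻¹ = q ∨ (e q : ℕ) < e q⁻¹
      · rw [if_pos h2] at hx; exact hprim1 q hq x hx
      · rw [if_neg h2, Finset.mem_inv'] at hx
        have := hprim1 q⁻¹ (inv_ne_one.mpr hq) x⁻¹ hx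
        rw [QuotientGroup.mk_inv] at this
        exact inv_injective this
  have hScard : ∀ q : G ⧸ H, q ≠ 1 → (S q).card = τ' := by
    intro q hq
    rw [hS]
    simp only [dif_neg hq]
    by_cases h2 : q⁻¹ = q ∨ (e q : ℕ) < e q⁻¹
    · rw [if_pos h2]; exact hprim2 q hq
    · rw [if_neg h2, Finset.card_inv]; exact hprim2 q⁻¹ (inv_ne_one.mpr hq)
  have hSinv : ∀ q : G ⧸ H, (S q)⁻¹ = S q⁻¹ := by
    intro q
    by_cases hq : q = 1
    · subst hq; rw [inv_one, hS1]; simp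
    · have hq' : q⁻¹ ≠ 1 := inv_ne_one.mpr hq
      by_cases hself : q⁻¹ = q
      · rw [hself]
        have hSq : S q = prim q hq := by
          rw [hS]; simp only [dif_neg hq]; rw [if_pos (Or.inl hself)]
        rw [hSq]
        ext x
        rw [Finset.mem_inv']
        constructor
        · intro hx
          have := hprim3 q hq hself x⁻¹ hx
          rwa [inv_inv] at this
        · intro hx; exact hprim3 q hq hself x hx
      · have hne : (e q : ℕ) ≠ e q⁻¹ := by
          intro h
          exact hself (e.injective (Fin.ext h)).symm
        rcases lt_or_gt_of_ne hne with hlt | hgt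
        · have hSq : S q = prim q hq := by
            rw [hS]; simp only [dif_neg hq]; rw [if_pos (Or.inr hlt)]
          have hSq' : S q⁻¹ = (prim q hq)⁻¹ := by
            rw [hS]; simp only [dif_neg hq']
            rw [if_neg]
            · simp only [inv_inv]
            · rw [inv_inv]
              push_neg
              exact ⟨fun h => absurd h.symm hself, by omega⟩
          rw [hSq, hSq']
        · have hSq : S q = (prim q⁻¹ hq')⁻¹ := by
            rw [hS]; simp only [dif_neg hq]
            rw [if_neg]
            push_neg
            exact ⟨hself, by omega⟩
          have hSq' : S q⁻¹ = prim q⁻¹ hq' := by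
            rw [hS]; simp only [dif_neg hq']
            rw [if_pos (Or.inr (by rw [inv_inv]; omega))]
          rw [hSq, hSq', inv_inv]
  set X : Set G := {x : G | x ∈ S (QuotientGroup.mk x)} with hX
  have hkey : ∀ g : G, {s ∈ (H : Set G) | g⁻¹ * s ∈ X} =
      (fun y => g * y) '' ↑(S ((g : G ⧸ H)⁻¹)) := by
    intro g
    ext s
    simp only [Set.mem_setOf_eq, Set.mem_image, Finset.mem_coe]
    constructor
    · rintro ⟨hsH, hsX⟩
      refine ⟨g⁻¹ * s, ?_, by group⟩
      have hcoset : ((g⁻¹ * s : G) : G ⧸ H) = (g : G ⧸ H)⁻¹ := by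
        rw [QuotientGroup.mk_mul, QuotientGroup.mk_inv,
          (QuotientGroup.eq_one_iff s).mpr hsH, mul_one]
      have hsX' : g⁻¹ * s ∈ S ((g⁻¹ * s : G) : G ⧸ H) := hsX
      rwa [hcoset] at hsX'
    · rintro ⟨y, hy, rfl⟩
      have hyq : (y : G ⧸ H) = (g : G ⧸ H)⁻¹ := hScoset _ y hy
      constructor
      · show g * y ∈ H
        rw [← QuotientGroup.eq_one_iff, QuotientGroup.mk_mul, hyq, mul_inv_cancel]
      · show g⁻¹ * (g * y) ∈ X
        rw [inv_mul_cancel_left]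
        show y ∈ S ((y : G) : G ⧸ H)
        rw [hyq]; exact hy
  have hcount : ∀ g : G, {s ∈ (H : Set G) | g⁻¹ * s ∈ X}.ncard
      = (S ((g : G ⧸ H)⁻¹)).card := by
    intro g
    rw [hkey g, Set.ncard_image_of_injective _ (mul_right_injective g), Set.ncard_coe_finset]
  refine ⟨X, ⟨?_, ?_⟩, ?_, ?_⟩
  · show (1 : G) ∈ S (((1 : G) : G ⧸ H)) → False
    rw [QuotientGroup.mk_one, hS1]
    exact Finset.notMem_empty 1
  · ext x
    rw [Set.mem_inv]
    show x⁻¹ ∈ S ((x⁻¹ : G) : G ⧸ H) ↔ x ∈ S ((x : G) : G ⧸ H)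
    rw [QuotientGroup.mk_inv, ← hSinv, Finset.mem_inv', inv_inv]
  · intro r hr
    have h1 : ((r : G ⧸ H))⁻¹ = 1 := by
      rw [(QuotientGroup.eq_one_iff r).mpr hr, inv_one]
    rw [hcount r, h1, hS1]
    simp
  · intro g hg
    have hq : ((g : G ⧸ H))⁻¹ ≠ 1 :=
      inv_ne_one.mpr (fun h => hg ((QuotientGroup.eq_one_iff g).mp h))
    rw [hcount g, hScard _ hq]
    exact hττ'


theorem statement_6 {G : Type*} [Group G] [Fintype G] (H : Subgroup G) [H.Normal]
    (hH : H ≠ ⊥) (τ : ℤ)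
    (hτ0 : 1 ≤ τ) (hτ1 : τ ≤ (Nat.card H : ℤ)) (hτodd : Odd τ) :
    IsRegularSetOfGroup (H : Set G) 0 τ ↔ IsPerfectCodeOfGroup (H : Set G) := by
  have hP1 : (1 : ℕ) ≤ Nat.card H := Nat.card_pos
  constructor
  · intro h
    exact lemD H 1 le_rfl (by exact_mod_cast hP1) odd_one (lemA H τ hτodd h)
  · intro h
    exact lemD H τ hτ0 hτ1 hτodd (lemA H 1 odd_one h)
end

section
/- Let G be a finite group, H a non-trivial normal subgroup of G, and let κ and τ be integers satisfying 0 ≤ κ ≤ |H| − 1, 1 ≤ τ ≤ |H| and gcd(2, |H| − 1) ∣ κ. Then H is a (κ,τ)-regular set of G if and only if H is a (0,τ)-regular set of G. -/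
open Pointwise

lemma exists_symmetric_finset {K : Type*} [Group K] [Fintype K] [DecidableEq K] :
    ∀ k : ℕ, k ≤ Fintype.card K - 1 → (Odd (Fintype.card K) → Even k) →
    ∃ S : Finset K, (1:K) ∉ S ∧ (∀ x ∈ S, x⁻¹ ∈ S) ∧ S.card = k := by
  intro k
  induction k using Nat.strong_induction_on with
  | _ k ih =>
    match k with
    | 0 => intro _ _; exact ⟨∅, by simp, by simp, rfl⟩
    | 1 =>
      intro hle hpar
      have hodd : ¬ Odd (Fintype.card K) := by
        intro h; have := hpar h; simp [Nat.even_iff] at this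
      have h2 : 2 ∣ Fintype.card K := (Nat.not_odd_iff_even.mp hodd).two_dvd
      obtain ⟨x, hx⟩ := exists_prime_orderOf_dvd_card (G := K) 2 h2
      refine ⟨{x}, ?_, ?_, rfl⟩
      · simp only [Finset.mem_singleton]
        intro h; rw [← h, orderOf_one] at hx; omega
      · intro y hy
        simp only [Finset.mem_singleton] at hy ⊢
        rw [hy]
        have : x * x = 1 := by
          have := pow_orderOf_eq_one x; rw [hx] at this; rwa [pow_two] at this
        exact (eq_inv_of_mul_eq_one_left this).symm
    | (m+2) =>
      intro hle hpar
      obtain ⟨S, hS1, hSinv, hScard⟩ := ih m (by omega) (by omega) (fun h => by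
        have := hpar h; rcases this with ⟨t, ht⟩; exact ⟨t-1, by omega⟩)
      set C : Finset K := (Finset.univ.erase 1) \ S with hC
      have hSsub : S ⊆ Finset.univ.erase 1 := by
        intro x hx; exact Finset.mem_erase.mpr ⟨fun h => hS1 (h ▸ hx), Finset.mem_univ x⟩
      have hCcard : 2 ≤ C.card := by
        rw [hC, Finset.card_sdiff_of_subset hSsub, Finset.card_erase_of_mem (Finset.mem_univ 1),
          Finset.card_univ, hScard]
        omega
      have hCmem : ∀ x ∈ C, x ≠ 1 ∧ x ∉ S := by
        intro x hx
        rw [hC, Finset.mem_sdiff, Finset.mem_erase] at hx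
        exact ⟨hx.1.1, hx.2⟩
      by_cases hinv : ∃ x ∈ C, x⁻¹ ≠ x
      · obtain ⟨x, hxC, hxne⟩ := hinv
        obtain ⟨hx1, hxS⟩ := hCmem x hxC
        have hxiS : x⁻¹ ∉ S := fun h => hxS (by simpa using hSinv _ h)
        refine ⟨insert x (insert x⁻¹ S), ?_, ?_, ?_⟩
        · simp only [Finset.mem_insert]
          push_neg
          exact ⟨Ne.symm hx1, Ne.symm (by simpa using hx1), hS1⟩
        · intro y hy
          simp only [Finset.mem_insert] at hy ⊢
          rcases hy with rfl | rfl | hy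
          · tauto
          · left; simp
          · right; right; exact hSinv _ hy
        · rw [Finset.card_insert_of_notMem, Finset.card_insert_of_notMem hxiS, hScard]
          simp only [Finset.mem_insert]
          push_neg
          exact ⟨Ne.symm hxne, hxS⟩
      · push_neg at hinv
        obtain ⟨x, hxC, y, hyC, hxy⟩ := Finset.one_lt_card.mp hCcard
        obtain ⟨hx1, hxS⟩ := hCmem x hxC
        obtain ⟨hy1, hyS⟩ := hCmem y hyC
        refine ⟨insert x (insert y S), ?_, ?_, ?_⟩
        · simp only [Finset.mem_insert]
          push_neg
          exact ⟨Ne.symm hx1, Ne.symm hy1, hS1⟩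
        · intro z hz
          simp only [Finset.mem_insert] at hz ⊢
          rcases hz with rfl | rfl | hz
          · left; exact hinv _ hxC
          · right; left; exact hinv _ hyC
          · right; right; exact hSinv _ hz
        · rw [Finset.card_insert_of_notMem, Finset.card_insert_of_notMem hyS, hScard]
          simp only [Finset.mem_insert]
          push_neg
          exact ⟨hxy, hxS⟩

theorem statement_7 {G : Type*} [Group G] [Fintype G] (H : Subgroup G) [H.Normal]
    (hH : H ≠ ⊥) (κ τ : ℤ)
    (hκ0 : 0 ≤ κ) (hκ1 : κ ≤ (Nat.card H : ℤ) - 1)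
    (hτ0 : 1 ≤ τ) (hτ1 : τ ≤ (Nat.card H : ℤ))
    (hgcd : ((Nat.gcd 2 (Nat.card H - 1) : ℕ) : ℤ) ∣ κ) :
    IsRegularSetOfGroup (H : Set G) κ τ ↔ IsRegularSetOfGroup (H : Set G) 0 τ := by
  classical
  constructor
  · rintro ⟨X, ⟨hX1, hXinv⟩, hin, hout⟩
    refine ⟨X \ ↑H, ⟨fun h => hX1 h.1, ?_⟩, ?_, ?_⟩
    · ext x
      simp only [Set.mem_inv, Set.mem_diff, SetLike.mem_coe, inv_mem_iff]
      conv_rhs => rw [← hXinv]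
      rw [Set.mem_inv]
    · intro r hr
      have he : {s ∈ (H:Set G) | r⁻¹ * s ∈ X \ ↑H} = ∅ := by
        ext s
        simp only [Set.mem_setOf_eq, Set.mem_empty_iff_false, iff_false, Set.mem_diff,
          SetLike.mem_coe]
        rintro ⟨hs, -, hsn⟩
        exact hsn (H.mul_mem (H.inv_mem hr) hs)
      rw [he]
      simp
    · intro g hg
      have heq : {s ∈ (H:Set G) | g⁻¹ * s ∈ X \ ↑H} = {s ∈ (H:Set G) | g⁻¹ * s ∈ X} := by
        ext s
        simp only [Set.mem_setOf_eq, Set.mem_diff, SetLike.mem_coe]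
        refine ⟨fun h => ⟨h.1, h.2.1⟩, fun h => ⟨h.1, h.2, fun hmem => ?_⟩⟩
        have hgH : g⁻¹ ∈ H := by
          have := H.mul_mem hmem (H.inv_mem h.1)
          simpa [mul_assoc] using this
        exact hg (by simpa using H.inv_mem hgH)
      rw [heq]
      exact hout g hg
  · rintro ⟨X, ⟨hX1, hXinv⟩, hin, hout⟩
    have : Fintype ↥H := Fintype.ofFinite _
    have hcardH : Nat.card ↥H = Fintype.card ↥H := Nat.card_eq_fintype_card
    have hpos : 1 ≤ Fintype.card ↥H := Fintype.card_pos
    obtain ⟨S, hS1, hSinv, hScard⟩ := exists_symmetric_finset (K := ↥H) κ.toNat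
      (by omega) (by
        intro hodd
        have h2 : 2 ∣ Fintype.card ↥H - 1 := by
          rcases hodd with ⟨t, ht⟩; omega
        have hg2 : Nat.gcd 2 (Nat.card ↥H - 1) = 2 := by
          rw [hcardH]; exact Nat.gcd_eq_left h2
        rw [hg2] at hgcd
        rcases hgcd with ⟨c, hc⟩
        refine ⟨c.toNat, ?_⟩
        omega)
    set S' : Set G := (↑) '' (S : Set ↥H) with hS'
    have hS'sub : S' ⊆ (H : Set G) := by
      rintro x ⟨y, -, rfl⟩; exact y.2
    have hS'1 : (1:G) ∉ S' := by
      rintro ⟨y, hy, hy1⟩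
      exact hS1 (by rwa [show y = 1 from Subtype.coe_injective hy1] at hy)
    have hS'inv : ∀ x : G, x ∈ S' ↔ x⁻¹ ∈ S' := by
      have key : ∀ x : G, x ∈ S' → x⁻¹ ∈ S' := by
        rintro x ⟨y, hy, rfl⟩
        exact ⟨y⁻¹, hSinv y hy, rfl⟩
      intro x
      exact ⟨key x, fun h => by simpa using key _ h⟩
    have hS'card : (S'.ncard : ℤ) = κ := by
      rw [hS', Set.ncard_image_of_injective _ Subtype.coe_injective, Set.ncard_coe_finset,
        hScard]
      omega
    refine ⟨X ∪ S', ⟨fun h => h.elim hX1 hS'1, ?_⟩, ?_, ?_⟩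
    · ext x
      simp only [Set.mem_inv, Set.mem_union]
      conv_rhs => rw [← hXinv]
      rw [Set.mem_inv, hS'inv x]
    · intro r hr
      have hempty : {s ∈ (H:Set G) | r⁻¹ * s ∈ X} = ∅ := by
        have := hin r hr
        have h0 : {s ∈ (H:Set G) | r⁻¹ * s ∈ X}.ncard = 0 := by exact_mod_cast this
        exact (Set.ncard_eq_zero (Set.toFinite _)).mp h0
      have heq : {s ∈ (H:Set G) | r⁻¹ * s ∈ X ∪ S'} = (fun x => r * x) '' S' := by
        ext s
        simp only [Set.mem_setOf_eq, Set.mem_union, Set.mem_image]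
        constructor
        · rintro ⟨hs, hX | hS⟩
          · have hin' : s ∈ {s ∈ (H:Set G) | r⁻¹ * s ∈ X} := ⟨hs, hX⟩
            rw [hempty] at hin'
            exact hin'.elim
          · exact ⟨r⁻¹ * s, hS, by group⟩
        · rintro ⟨x, hx, rfl⟩
          have hxH : x ∈ H := hS'sub hx
          refine ⟨H.mul_mem (SetLike.mem_coe.mpr hr) hxH, Or.inr ?_⟩
          simpa [mul_assoc] using hx
      rw [heq, Set.ncard_image_of_injective _ (mul_right_injective r)]
      exact hS'card
    · intro g hg
      have heq : {s ∈ (H:Set G) | g⁻¹ * s ∈ X ∪ S'} = {s ∈ (H:Set G) | g⁻¹ * s ∈ X} := by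
        ext s
        simp only [Set.mem_setOf_eq, Set.mem_union]
        refine ⟨fun h => ⟨h.1, h.2.resolve_right fun hS => ?_⟩, fun h => ⟨h.1, Or.inl h.2⟩⟩
        have hmem : g⁻¹ * s ∈ H := hS'sub hS
        have hgH : g⁻¹ ∈ H := by
          have := H.mul_mem hmem (H.inv_mem h.1)
          simpa [mul_assoc] using this
        exact hg (by simpa using H.inv_mem hgH)
      rw [heq]
      exact hout g hg
end

section
/- Let G be a finite group, H a subgroup of G, and X an inverse-closed subset of G \ {1}. If H is a (κ,τ)-regular set of the Cayley graph Cay(G,X), then H is a (0,τ)-regular set of the Cayley graph Cay(G, X \ H). -/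
open Pointwise

theorem statement_8 {G : Type*} [Group G] [Fintype G] (H : Subgroup G)
    (X : Set G) (hX : IsConnectionSet X) (κ τ : ℕ)
    (h : IsRegularSetOfCayley X (H : Set G) κ τ) :
    IsRegularSetOfCayley (X \ (H : Set G)) (H : Set G) 0 τ := by
  constructor
  · intro r hr
    have he : {s ∈ (H : Set G) | r⁻¹ * s ∈ X \ (H : Set G)} = ∅ := by
      ext s
      simp only [Set.mem_setOf_eq, Set.mem_empty_iff_false, iff_false, not_and,
        Set.mem_diff, SetLike.mem_coe]
      intro hs hxs hnH
      exact hnH (H.mul_mem (H.inv_mem hr) hs)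
    rw [he]
    simp
  · intro g hg
    have : {s ∈ (H : Set G) | g⁻¹ * s ∈ X \ (H : Set G)} =
        {s ∈ (H : Set G) | g⁻¹ * s ∈ X} := by
      ext s
      simp only [Set.mem_setOf_eq, Set.mem_diff, SetLike.mem_coe]
      refine ⟨fun ⟨hs, hx, _⟩ => ⟨hs, hx⟩, fun ⟨hs, hx⟩ => ⟨hs, hx, fun hmem => ?_⟩⟩
      have : g ∈ H := by
        have := H.mul_mem hs (H.inv_mem hmem)
        simpa [mul_assoc] using this
      exact hg this
    rw [this]
    exact h.2 g hg
end

section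
/- Let G be a finite group, H a non-trivial subgroup of G, Y an inverse-closed subset of G \ {1}, and κ an integer satisfying 0 ≤ κ ≤ |H| − 1 and gcd(2, |H| − 1) ∣ κ. If H is a (0,τ)-regular set of the Cayley graph Cay(G,Y), then there exists an inverse-closed subset Z of H \ {1} with |Z| = κ such that H is a (κ,τ)-regular set of the Cayley graph Cay(G, Y ∪ Z). -/
open Pointwise

lemma aux_inv_closed_subset {G : Type*} [Group G] [DecidableEq G] :
    ∀ n (S : Finset G), n ≤ S.card → (∀ x ∈ S, x⁻¹ ∈ S) →
      (Odd n → ∃ t ∈ S, t⁻¹ = t) →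
      ∃ Z : Finset G, Z ⊆ S ∧ (∀ x ∈ Z, x⁻¹ ∈ Z) ∧ Z.card = n := by
  intro n
  induction n using Nat.strong_induction_on with
  | _ n ih =>
    intro S hn hinv hodd
    rcases Nat.eq_zero_or_pos n with h0 | hpos
    · exact ⟨∅, by simp, by simp, by simp [h0]⟩
    by_cases hpar : Odd n
    · obtain ⟨t, htS, htinv⟩ := hodd hpar
      have hcard : n - 1 ≤ (S.erase t).card := by
        rw [Finset.card_erase_of_mem htS]; omega
      have hevensub : ¬ Odd (n - 1) := by
        rcases hpar with ⟨k, hk⟩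
        simp [Nat.not_odd_iff_even]
        exact ⟨k, by omega⟩
      obtain ⟨Z', hZ'sub, hZ'inv, hZ'card⟩ := ih (n - 1) (by omega) (S.erase t) hcard
        (fun x hx => by
          rcases Finset.mem_erase.mp hx with ⟨hxt, hxS⟩
          refine Finset.mem_erase.mpr ⟨?_, hinv x hxS⟩
          intro hc
          exact hxt (by rw [← htinv, ← hc, inv_inv]))
        (fun ho => absurd ho hevensub)
      have htZ' : t ∉ Z' := fun hc => (Finset.mem_erase.mp (hZ'sub hc)).1 rfl
      refine ⟨insert t Z', ?_, ?_, ?_⟩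
      · intro x hx
        rcases Finset.mem_insert.mp hx with rfl | hx'
        · exact htS
        · exact (Finset.mem_erase.mp (hZ'sub hx')).2
      · intro x hx
        rcases Finset.mem_insert.mp hx with rfl | hx'
        · rw [htinv]; exact Finset.mem_insert_self _ _
        · exact Finset.mem_insert_of_mem (hZ'inv x hx')
      · rw [Finset.card_insert_of_notMem htZ', hZ'card]; omega
    · by_cases hall : ∀ x ∈ S, x⁻¹ = x
      · obtain ⟨Z, hZ, hcard⟩ := Finset.exists_subset_card_eq hn
        exact ⟨Z, hZ, fun x hx => by rw [hall x (hZ hx)]; exact hx, hcard⟩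
      · push_neg at hall
        obtain ⟨x, hxS, hxne⟩ := hall
        have hn2 : 2 ≤ n := by
          rcases Nat.even_or_odd n with he | ho
          · rcases he with ⟨k, hk⟩; omega
          · exact absurd ho hpar
        have hxinvS : x⁻¹ ∈ S := hinv x hxS
        have hxinv_mem : x⁻¹ ∈ S.erase x := Finset.mem_erase.mpr ⟨hxne, hxinvS⟩
        set S' := (S.erase x).erase x⁻¹ with hS'
        have hcardS' : S'.card = S.card - 2 := by
          rw [hS', Finset.card_erase_of_mem hxinv_mem, Finset.card_erase_of_mem hxS]; omega
        have hoddsub : ¬ Odd (n - 2) := by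
          intro ⟨k, hk⟩; exact hpar ⟨k + 1, by omega⟩
        obtain ⟨Z', hZ'sub, hZ'inv, hZ'card⟩ := ih (n - 2) (by omega) S'
          (by omega)
          (fun y hy => by
            rw [hS'] at hy ⊢
            rcases Finset.mem_erase.mp hy with ⟨hy1, hy2⟩
            rcases Finset.mem_erase.mp hy2 with ⟨hy3, hy4⟩
            refine Finset.mem_erase.mpr ⟨?_, Finset.mem_erase.mpr ⟨?_, hinv y hy4⟩⟩
            · intro hc; exact hy3 (inv_injective hc)
            · intro hc; exact hy1 (by rw [← hc, inv_inv]))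
          (fun ho => absurd ho hoddsub)
        have hxZ' : x ∉ Z' := fun hc =>
          (Finset.mem_erase.mp (Finset.mem_erase.mp (hZ'sub hc)).2).1 rfl
        have hxinvZ' : x⁻¹ ∉ Z' := fun hc => (Finset.mem_erase.mp (hZ'sub hc)).1 rfl
        have hxnotin : x ∉ insert x⁻¹ Z' := by
          simp only [Finset.mem_insert]
          rintro (hc | hc)
          · exact hxne hc.symm
          · exact hxZ' hc
        refine ⟨insert x (insert x⁻¹ Z'), ?_, ?_, ?_⟩
        · intro y hy
          rcases Finset.mem_insert.mp hy with rfl | hy'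
          · exact hxS
          rcases Finset.mem_insert.mp hy' with rfl | hy''
          · exact hxinvS
          · exact (Finset.mem_erase.mp (Finset.mem_erase.mp (hZ'sub hy'')).2).2
        · intro y hy
          rcases Finset.mem_insert.mp hy with rfl | hy'
          · exact Finset.mem_insert_of_mem (Finset.mem_insert_self _ _)
          rcases Finset.mem_insert.mp hy' with rfl | hy''
          · rw [inv_inv]; exact Finset.mem_insert_self _ _
          · exact Finset.mem_insert_of_mem (Finset.mem_insert_of_mem (hZ'inv y hy''))
        · rw [Finset.card_insert_of_notMem hxnotin,
            Finset.card_insert_of_notMem hxinvZ', hZ'card]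
          omega

theorem statement_9 {G : Type*} [Group G] [Fintype G] (H : Subgroup G) (hH : H ≠ ⊥)
    (Y : Set G) (hY : IsConnectionSet Y) (κ : ℤ) (τ : ℕ)
    (hκ0 : 0 ≤ κ) (hκ1 : κ ≤ (Nat.card H : ℤ) - 1)
    (hgcd : ((Nat.gcd 2 (Nat.card H - 1) : ℕ) : ℤ) ∣ κ)
    (h : IsRegularSetOfCayley Y (H : Set G) 0 τ) :
    ∃ Z : Set G, Z ⊆ (H : Set G) \ {1} ∧ Z⁻¹ = Z ∧ (Z.ncard : ℤ) = κ ∧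
      IsRegularSetOfCayley (Y ∪ Z) (H : Set G) κ τ := by
  classical
  set n := κ.toNat with hn
  have hκn : (n : ℤ) = κ := Int.toNat_of_nonneg hκ0
  set A : Finset G := Finset.univ.filter (fun g => g ∈ H) with hA
  have hAcard : A.card = Nat.card H := by
    rw [Nat.card_eq_fintype_card, Fintype.card_subtype]
  have h1A : (1 : G) ∈ A := by simp [hA, one_mem]
  set S : Finset G := A.erase 1 with hS
  have hHpos : 1 ≤ Nat.card H := Nat.card_pos
  have hScard : S.card = Nat.card H - 1 := by
    rw [hS, Finset.card_erase_of_mem h1A, hAcard]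
  have hnS : n ≤ S.card := by rw [hScard]; omega
  have hSH : ∀ x ∈ S, x ∈ H ∧ x ≠ 1 := by
    intro x hx
    rcases Finset.mem_erase.mp hx with ⟨hx1, hxA⟩
    exact ⟨(Finset.mem_filter.mp hxA).2, hx1⟩
  have hSinv : ∀ x ∈ S, x⁻¹ ∈ S := by
    intro x hx
    obtain ⟨hxH, hx1⟩ := hSH x hx
    refine Finset.mem_erase.mpr ⟨?_, Finset.mem_filter.mpr ⟨Finset.mem_univ _, inv_mem hxH⟩⟩
    simpa using hx1
  have hoddinv : Odd n → ∃ t ∈ S, t⁻¹ = t := by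
    intro hoddn
    have hκodd : ¬ (2 : ℤ) ∣ κ := by
      rw [← hκn]
      rcases hoddn with ⟨k, hk⟩
      omega
    have hmodd : ¬ 2 ∣ (Nat.card H - 1) := by
      intro hdvd
      have : Nat.gcd 2 (Nat.card H - 1) = 2 := Nat.gcd_eq_left hdvd
      rw [this] at hgcd
      exact hκodd (by exact_mod_cast hgcd)
    have hcard2 : 1 < Nat.card H := (Subgroup.one_lt_card_iff_ne_bot H).mpr hH
    have heven : 2 ∣ Fintype.card H := by
      rw [← Nat.card_eq_fintype_card]
      omega
    haveI : Fact (Nat.Prime 2) := ⟨Nat.prime_two⟩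
    obtain ⟨t, ht⟩ := exists_prime_orderOf_dvd_card 2 heven
    refine ⟨(t : G), ?_, ?_⟩
    · refine Finset.mem_erase.mpr ⟨?_, Finset.mem_filter.mpr ⟨Finset.mem_univ _, t.2⟩⟩
      intro hc
      have : t = 1 := by ext; exact hc
      rw [this] at ht; simp at ht
    · have h2 : t * t = 1 := by
        have := pow_orderOf_eq_one t
        rw [ht, pow_two] at this
        exact this
      have : t⁻¹ = t := by rw [inv_eq_iff_mul_eq_one, h2]
      exact_mod_cast congrArg (Subtype.val) this
  obtain ⟨Z, hZS, hZinv, hZcard⟩ := aux_inv_closed_subset n S hnS hSinv hoddinv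
  have hFin : ∀ T : Set G, T.Finite := fun T => Set.toFinite T
  have hYH : ∀ r ∈ H, ∀ s ∈ H, r⁻¹ * s ∉ Y := by
    intro r hr s hs hmem
    have h0 := h.1 r hr
    have : ({s ∈ (H : Set G) | r⁻¹ * s ∈ Y}).ncard = 0 := by exact_mod_cast h0
    rw [Set.ncard_eq_zero (hFin _)] at this
    have : s ∈ ({s ∈ (H : Set G) | r⁻¹ * s ∈ Y}) := ⟨hs, hmem⟩
    simp_all
  have hZsubH : ∀ x ∈ Z, x ∈ H ∧ x ≠ 1 := fun x hx => hSH x (hZS hx)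
  refine ⟨(↑Z : Set G), ?_, ?_, ?_, ?_, ?_⟩
  · intro x hx
    obtain ⟨h1, h2⟩ := hZsubH x hx
    exact ⟨h1, h2⟩
  · ext x
    simp only [Set.mem_inv, Finset.coe_sort_coe, Set.mem_setOf_eq, Finset.mem_coe]
    constructor
    · intro hx
      have := hZinv _ hx
      rwa [inv_inv] at this
    · exact fun hx => hZinv _ hx
  · rw [Set.ncard_coe_finset, hZcard, hκn]
  -- (κ,τ)-regularity, first part
  · intro r hr
    have hset : {s ∈ (H : Set G) | r⁻¹ * s ∈ (Y ∪ ↑Z)} = (fun z => r * z) '' (↑Z : Set G) := by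
      ext s
      simp only [Set.mem_setOf_eq, Set.mem_union, Set.mem_image, Finset.mem_coe, SetLike.mem_coe]
      constructor
      · rintro ⟨hsH, hy | hz⟩
        · exact absurd hy (hYH r hr s hsH)
        · exact ⟨r⁻¹ * s, hz, by group⟩
      · rintro ⟨z, hz, rfl⟩
        refine ⟨mul_mem hr (hZsubH z hz).1, Or.inr ?_⟩
        simpa using hz
    rw [hset, Set.ncard_image_of_injective _ (mul_right_injective r),
      Set.ncard_coe_finset, hZcard, hκn]
  -- second part
  · intro g hg
    have hset : {s ∈ (H : Set G) | g⁻¹ * s ∈ (Y ∪ ↑Z)} = {s ∈ (H : Set G) | g⁻¹ * s ∈ Y} := by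
      ext s
      simp only [Set.mem_setOf_eq, Set.mem_union, SetLike.mem_coe, Finset.mem_coe]
      constructor
      · rintro ⟨hsH, hy | hz⟩
        · exact ⟨hsH, hy⟩
        · exfalso
          have hzH : g⁻¹ * s ∈ H := (hZsubH _ hz).1
          have : g ∈ H := by
            have := mul_mem hsH (inv_mem hzH)
            simpa [mul_assoc] using this
          exact hg this
      · exact fun ⟨h1, h2⟩ => ⟨h1, Or.inl h2⟩
    rw [hset]
    exact h.2 g hg
end

section
/- Let H be a non-trivial finite group and κ an integer satisfying 0 ≤ κ ≤ |H| − 1 and gcd(2, |H| − 1) ∣ κ. Then there exists an inverse-closed subset Z of H \ {1} with |Z| = κ. -/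
open Pointwise

open Finset

lemma step_two {H : Type*} [Group H] [Fintype H] [DecidableEq H]
    (Z : Finset H) (hZ1 : (1:H) ∉ Z) (hZi : ∀ x ∈ Z, x⁻¹ ∈ Z)
    (h : Z.card + 2 ≤ Fintype.card H - 1) :
    ∃ Z' : Finset H, (1:H) ∉ Z' ∧ (∀ x ∈ Z', x⁻¹ ∈ Z') ∧ Z'.card = Z.card + 2 := by
  classical
  have hcompl : ({1}ᶜ : Finset H).card = Fintype.card H - 1 := by
    simp [Finset.card_compl]
  have hZsub : Z ⊆ ({1}ᶜ : Finset H) := fun x hx => by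
    simp only [mem_compl, mem_singleton]; rintro rfl; exact hZ1 hx
  have hss : Z ⊂ ({1}ᶜ : Finset H) := hZsub.ssubset_of_ne (by
    intro he; rw [he] at h; omega)
  obtain ⟨x, hx1, hxZ⟩ := exists_of_ssubset hss
  have hx1' : x ≠ 1 := by simpa using hx1
  have hxinvZ : x⁻¹ ∉ Z := fun hc => hxZ (by simpa using hZi _ hc)
  by_cases hxx : x⁻¹ = x
  · -- x is an involution; need a second element
    have hZsub' : insert x Z ⊆ ({1}ᶜ : Finset H) := insert_subset hx1 hZsub
    have hcard' : (insert x Z).card = Z.card + 1 := card_insert_of_notMem hxZ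
    have hss' : insert x Z ⊂ ({1}ᶜ : Finset H) := hZsub'.ssubset_of_ne (by
      intro he; rw [he, hcompl] at hcard'; omega)
    obtain ⟨y, hy1, hyZ'⟩ := exists_of_ssubset hss'
    have hy1' : y ≠ 1 := by simpa using hy1
    have hyx : y ≠ x := fun hc => hyZ' (by simp [hc])
    have hyZ : y ∉ Z := fun hc => hyZ' (mem_insert_of_mem hc)
    have hyinvZ : y⁻¹ ∉ Z := fun hc => hyZ (by simpa using hZi _ hc)
    by_cases hyy : y⁻¹ = y
    · refine ⟨insert y (insert x Z), ?_, ?_, ?_⟩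
      · simp only [mem_insert]
        push_neg
        exact ⟨hy1'.symm, hx1'.symm, hZ1⟩
      · intro z hz
        simp only [mem_insert] at hz ⊢
        rcases hz with rfl | rfl | hz
        · left; exact hyy
        · right; left; exact hxx
        · right; right; exact hZi _ hz
      · rw [card_insert_of_notMem hyZ', hcard']
    · refine ⟨insert y (insert y⁻¹ Z), ?_, ?_, ?_⟩
      · simp only [mem_insert]
        push_neg
        refine ⟨hy1'.symm, ?_, hZ1⟩
        simpa using hy1'
      · intro z hz
        simp only [mem_insert] at hz ⊢
        rcases hz with rfl | rfl | hz
        · right; left; rfl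
        · left; simp
        · right; right; exact hZi _ hz
      · rw [card_insert_of_notMem, card_insert_of_notMem hyinvZ]
        simp only [mem_insert]
        push_neg
        exact ⟨fun hc => hyy hc.symm, hyZ⟩
  · refine ⟨insert x (insert x⁻¹ Z), ?_, ?_, ?_⟩
    · simp only [mem_insert]
      push_neg
      refine ⟨hx1'.symm, ?_, hZ1⟩
      simpa using hx1'
    · intro z hz
      simp only [mem_insert] at hz ⊢
      rcases hz with rfl | rfl | hz
      · right; left; rfl
      · left; simp
      · right; right; exact hZi _ hz
    · rw [card_insert_of_notMem, card_insert_of_notMem hxinvZ]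
      simp only [mem_insert]
      push_neg
      exact ⟨fun hc => hxx hc.symm, hxZ⟩

lemma step_many {H : Type*} [Group H] [Fintype H] [DecidableEq H] (k : ℕ) :
    ∀ Z : Finset H, (1:H) ∉ Z → (∀ x ∈ Z, x⁻¹ ∈ Z) →
      Z.card + 2 * k ≤ Fintype.card H - 1 →
      ∃ Z' : Finset H, (1:H) ∉ Z' ∧ (∀ x ∈ Z', x⁻¹ ∈ Z') ∧ Z'.card = Z.card + 2 * k := by
  induction k with
  | zero => intro Z h1 hi _; exact ⟨Z, h1, hi, by ring⟩
  | succ n ih =>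
    intro Z h1 hi hle
    obtain ⟨Z', h1', hi', hc'⟩ := step_two Z h1 hi (by omega)
    obtain ⟨Z'', h1'', hi'', hc''⟩ := ih Z' h1' hi' (by omega)
    exact ⟨Z'', h1'', hi'', by omega⟩

theorem statement_10 {H : Type*} [Group H] [Fintype H] [Nontrivial H] (κ : ℤ)
    (hκ0 : 0 ≤ κ) (hκ1 : κ ≤ (Nat.card H : ℤ) - 1)
    (hgcd : ((Nat.gcd 2 (Nat.card H - 1) : ℕ) : ℤ) ∣ κ) :
    ∃ Z : Set H, Z ⊆ {(1 : H)}ᶜ ∧ Z⁻¹ = Z ∧ (Z.ncard : ℤ) = κ := by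
  classical
  have hnat : Nat.card H = Fintype.card H := Nat.card_eq_fintype_card
  set n := Fintype.card H with hn
  have hn2 : 2 ≤ n := Fintype.one_lt_card
  obtain ⟨m, rfl⟩ : ∃ m : ℕ, (m : ℤ) = κ := ⟨κ.toNat, Int.toNat_of_nonneg hκ0⟩
  have hm : m ≤ n - 1 := by
    rw [hnat] at hκ1; omega
  have key : ∃ Z' : Finset H, (1:H) ∉ Z' ∧ (∀ x ∈ Z', x⁻¹ ∈ Z') ∧ Z'.card = m := by
    rcases Nat.even_or_odd m with ⟨k, hk⟩ | ⟨k, hk⟩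
    · obtain ⟨Z', h1, hi, hc⟩ := step_many (H := H) k ∅ (by simp) (by simp)
        (by simp; omega)
      exact ⟨Z', h1, hi, by simp at hc; omega⟩
    · -- m odd: gcd must be 1, so n - 1 is odd, n even, Cauchy gives an involution
      have hgcd1 : Nat.gcd 2 (Nat.card H - 1) = 1 := by
        rcases (Nat.prime_two.eq_one_or_self_of_dvd _ (Nat.gcd_dvd_left 2 (Nat.card H - 1))) with h | h
        · exact h
        · exfalso
          rw [h] at hgcd
          obtain ⟨c, hc⟩ := hgcd
          omega
      have hdvd : 2 ∣ n := by
        rcases Nat.even_or_odd n with he | ho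
        · exact he.two_dvd
        · exfalso
          obtain ⟨t, ht⟩ := ho
          have h2 : 2 ∣ (n - 1) := by omega
          rw [hnat, Nat.gcd_eq_left h2] at hgcd1
          omega
      haveI : Fact (Nat.Prime 2) := ⟨Nat.prime_two⟩
      obtain ⟨x, hx⟩ := exists_prime_orderOf_dvd_card (G := H) 2 hdvd
      have hx1 : x ≠ 1 := by
        intro hc; rw [hc, orderOf_one] at hx; omega
      have hxsq : x * x = 1 := by
        have := pow_orderOf_eq_one x
        rwa [hx, pow_two] at this
      have hxinv : x⁻¹ = x := inv_eq_of_mul_eq_one_left hxsq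
      obtain ⟨Z', h1, hi, hc⟩ := step_many (H := H) k {x}
        (by simp [Ne.symm hx1, eq_comm])
        (by intro z hz; simp at hz; subst hz; simp [hxinv])
        (by simp; omega)
      exact ⟨Z', h1, hi, by simp at hc; omega⟩
  obtain ⟨Z', h1, hi, hc⟩ := key
  refine ⟨(Z' : Set H), ?_, ?_, ?_⟩
  · intro x hx
    simp only [Set.mem_compl_iff, Set.mem_singleton_iff]
    rintro rfl
    exact h1 (by exact_mod_cast hx)
  · ext x
    simp only [Set.mem_inv, Finset.mem_coe]
    constructor
    · intro h; simpa using hi _ h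
    · intro h; exact hi _ h
  · rw [Set.ncard_coe_finset, hc]
end

section
/- Let G be a finite group, H a subgroup of G, X an inverse-closed subset of G \ {1}, and τ a positive integer. Suppose H is a (0,τ)-regular set of the Cayley graph Cay(G,X), and let Z be any inverse-closed subset of H with |Z| = τ. Then H is a code of G with respect to X ∪ Z with parameter τ, that is, for every g ∈ G there are exactly τ pairs (c,y) ∈ H × (X ∪ Z) such that g = cy. -/
open Pointwise

theorem statement_11 {G : Type*} [Group G] [Fintype G] (H : Subgroup G)
    (X : Set G) (hX : IsConnectionSet X) (τ : ℕ) (hτ : 0 < τ)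
    (h : IsRegularSetOfCayley X (H : Set G) 0 τ)
    (Z : Set G) (hZH : Z ⊆ (H : Set G)) (hZinv : Z⁻¹ = Z) (hZcard : Z.ncard = τ) :
    IsCodeOfGroup (H : Set G) (X ∪ Z) τ := by
  obtain ⟨hX1, hXinv⟩ := hX
  intro g
  have hinj : Function.Injective (fun c : G => (c, c⁻¹ * g)) := by
    intro a b hab
    exact (Prod.mk.injEq _ _ _ _ ▸ hab : _ ∧ _).1
  have hset : {p : G × G | p.1 ∈ (H : Set G) ∧ p.2 ∈ X ∪ Z ∧ g = p.1 * p.2}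
      = (fun c : G => (c, c⁻¹ * g)) '' {c : G | c ∈ (H : Set G) ∧ c⁻¹ * g ∈ X ∪ Z} := by
    ext ⟨c, y⟩
    simp only [Set.mem_setOf_eq, Set.mem_image, Prod.mk.injEq]
    constructor
    · rintro ⟨hc, hy, rfl⟩
      exact ⟨c, ⟨hc, by rwa [inv_mul_cancel_left]⟩, rfl, by rw [inv_mul_cancel_left]⟩
    · rintro ⟨d, ⟨hd, hdy⟩, rfl, rfl⟩
      exact ⟨hd, hdy, by rw [mul_inv_cancel_left]⟩
  rw [hset, Set.ncard_image_of_injective _ hinj]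
  by_cases hg : g ∈ H
  · -- X-part empty
    have hXempty : ∀ c ∈ (H : Set G), c⁻¹ * g ∉ X := by
      intro c hc hcX
      have h1 := h.1 c hc
      have h0 : {s ∈ (H : Set G) | c⁻¹ * s ∈ X}.ncard = 0 := by exact_mod_cast h1
      have hE := (Set.ncard_eq_zero (Set.toFinite _)).mp h0
      have : g ∈ {s ∈ (H : Set G) | c⁻¹ * s ∈ X} := ⟨hg, hcX⟩
      rw [hE] at this
      exact this
    have heq : {c : G | c ∈ (H : Set G) ∧ c⁻¹ * g ∈ X ∪ Z}
        = (fun z : G => g * z⁻¹) '' Z := by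
      ext c
      simp only [Set.mem_setOf_eq, Set.mem_union, Set.mem_image]
      constructor
      · rintro ⟨hc, hcX | hcZ⟩
        · exact absurd hcX (hXempty c hc)
        · exact ⟨c⁻¹ * g, hcZ, by group⟩
      · rintro ⟨z, hz, rfl⟩
        refine ⟨H.mul_mem hg (H.inv_mem (hZH hz)), Or.inr ?_⟩
        have : (g * z⁻¹)⁻¹ * g = z := by group
        rw [this]; exact hz
    rw [heq, Set.ncard_image_of_injective _ (fun a b hab => by
      simpa using mul_left_cancel hab), hZcard]
  · -- Z-part empty
    have hZempty : ∀ c ∈ (H : Set G), c⁻¹ * g ∉ Z := by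
      intro c hc hcZ
      exact hg (by simpa [mul_inv_cancel_left] using H.mul_mem hc (hZH hcZ))
    have heq : {c : G | c ∈ (H : Set G) ∧ c⁻¹ * g ∈ X ∪ Z}
        = {s ∈ (H : Set G) | g⁻¹ * s ∈ X} := by
      ext c
      simp only [Set.mem_setOf_eq, Set.mem_union]
      constructor
      · rintro ⟨hc, hcX | hcZ⟩
        · refine ⟨hc, ?_⟩
          have : g⁻¹ * c = (c⁻¹ * g)⁻¹ := by group
          rw [this, ← hXinv]
          exact Set.inv_mem_inv.mpr hcX
        · exact absurd hcZ (hZempty c hc)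
      · rintro ⟨hc, hcX⟩
        refine ⟨hc, Or.inl ?_⟩
        have : c⁻¹ * g = (g⁻¹ * c)⁻¹ := by group
        rw [this, ← hXinv]
        exact Set.inv_mem_inv.mpr hcX
    rw [heq]
    exact_mod_cast h.2 g hg
end

section
/- Let G be a finite group, H a subgroup of G, Y an inverse-closed subset of G containing 1, and λ a positive integer. If H is a code of G with respect to Y with parameter λ, then λ = |H|·|Y|/|G| and H is a (0,λ)-regular set of the Cayley graph Cay(G, Y \ H). -/
open Pointwise

section aux
variable {G : Type*} [Group G]

lemma pair_count (C Y : Set G) (g : G) :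
    {p : G × G | p.1 ∈ C ∧ p.2 ∈ Y ∧ g = p.1 * p.2}.ncard
      = {c : G | c ∈ C ∧ c⁻¹ * g ∈ Y}.ncard := by
  have himg : {p : G × G | p.1 ∈ C ∧ p.2 ∈ Y ∧ g = p.1 * p.2}
      = (fun c => (c, c⁻¹ * g)) '' {c : G | c ∈ C ∧ c⁻¹ * g ∈ Y} := by
    ext ⟨a, b⟩
    simp only [Set.mem_setOf_eq, Set.mem_image, Prod.mk.injEq]
    constructor
    · rintro ⟨ha, hb, rfl⟩
      exact ⟨a, ⟨ha, by simpa using hb⟩, rfl, by group⟩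
    · rintro ⟨c, ⟨hc, hcy⟩, rfl, rfl⟩
      exact ⟨hc, hcy, by group⟩
  rw [himg, Set.ncard_image_of_injective]
  intro a b hab
  exact (Prod.mk.injEq _ _ _ _ ▸ hab).1

lemma count_sum [Fintype G] (H : Subgroup G) (Y : Set G) (l : ℕ)
    (h : ∀ g : G, {c : G | c ∈ (H : Set G) ∧ c⁻¹ * g ∈ Y}.ncard = l) :
    l * Nat.card G = Nat.card H * Y.ncard := by
  classical
  have key : ∀ g : G, {c : G | c ∈ (H : Set G) ∧ c⁻¹ * g ∈ Y}.ncard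
      = (Finset.univ.filter (fun c : G => c ∈ (H : Set G) ∧ c⁻¹ * g ∈ Y)).card := by
    intro g
    rw [Set.ncard_eq_toFinset_card']
    congr 1
    ext c
    simp
  have hsum : ∑ g : G, (Finset.univ.filter (fun c : G => c ∈ (H : Set G) ∧ c⁻¹ * g ∈ Y)).card
      = ∑ c : G, (Finset.univ.filter (fun g : G => c ∈ (H : Set G) ∧ c⁻¹ * g ∈ Y)).card := by
    simp only [Finset.card_filter]
    exact Finset.sum_comm
  have hinner : ∀ c : G, (Finset.univ.filter (fun g : G => c ∈ (H : Set G) ∧ c⁻¹ * g ∈ Y)).card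
      = if c ∈ (H : Set G) then Y.ncard else 0 := by
    intro c
    by_cases hc : c ∈ (H : Set G)
    · simp only [hc, true_and, if_true]
      rw [Set.ncard_eq_toFinset_card']
      apply Finset.card_bij (fun g _ => c⁻¹ * g)
      · intro g hg; simp at hg ⊢; exact hg
      · intro a ha b hb hab; exact mul_left_cancel hab
      · intro y hy; exact ⟨c * y, by simp at hy ⊢; exact hy, by group⟩
    · simp [hc]
  have hleft : ∑ g : G, {c : G | c ∈ (H : Set G) ∧ c⁻¹ * g ∈ Y}.ncard = l * Nat.card G := by
    simp only [h]
    simp [Nat.card_eq_fintype_card, mul_comm]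
  have hright : ∑ c : G, (if c ∈ (H : Set G) then Y.ncard else 0) = Nat.card H * Y.ncard := by
    rw [← Finset.sum_filter, Finset.sum_const, smul_eq_mul]
    congr 1
    simp [Nat.card_eq_fintype_card, Fintype.card_subtype, SetLike.mem_coe]
  calc l * Nat.card G = ∑ g : G, {c : G | c ∈ (H : Set G) ∧ c⁻¹ * g ∈ Y}.ncard := hleft.symm
    _ = ∑ c : G, (Finset.univ.filter (fun g : G => c ∈ (H : Set G) ∧ c⁻¹ * g ∈ Y)).card := by
        simp only [key]; exact hsum
    _ = Nat.card H * Y.ncard := by simp only [hinner]; exact hright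

end aux

theorem statement_12 {G : Type*} [Group G] [Fintype G] (H : Subgroup G)
    (Y : Set G) (hY1 : (1 : G) ∈ Y) (hYinv : Y⁻¹ = Y) (l : ℕ) (hl : 0 < l)
    (h : IsCodeOfGroup (H : Set G) Y l) :
    l = Nat.card H * Y.ncard / Nat.card G ∧
      IsRegularSetOfCayley (Y \ (H : Set G)) (H : Set G) 0 l := by
  have hcount : ∀ g : G, {c : G | c ∈ (H : Set G) ∧ c⁻¹ * g ∈ Y}.ncard = l := by
    intro g
    rw [← pair_count]
    exact h g
  have hmul : l * Nat.card G = Nat.card H * Y.ncard := count_sum H Y l hcount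
  constructor
  · rw [← hmul, Nat.mul_div_cancel]
    exact Nat.card_pos
  constructor
  · intro r hr
    norm_cast
    rw [Set.ncard_eq_zero (Set.toFinite _)]
    ext s
    simp only [Set.mem_setOf_eq, Set.mem_diff, Set.mem_empty_iff_false, iff_false]
    rintro ⟨hs, _, hns⟩
    exact hns (mul_mem (inv_mem hr) hs)
  · intro g hg
    norm_cast
    rw [← hcount g]
    congr 1
    ext s
    simp only [Set.mem_setOf_eq, Set.mem_diff]
    constructor
    · rintro ⟨hs, hy, _⟩
      refine ⟨hs, ?_⟩
      rw [← hYinv]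
      simpa using hy
    · rintro ⟨hs, hy⟩
      refine ⟨hs, ?_, ?_⟩
      · rw [← hYinv] at hy
        simpa using hy
      · intro hmem
        simpa using hg (by simpa using mul_mem hs (inv_mem hmem))
end
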